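/- arXiv:1312.2569 — 7 statements merged into one kernel-verified Lean document; each statement's English description precedes it below -/
import Mathlib

section
/- For every prime p there exists a positive integer n such that the largest prime factor of g(n) is equal to p. -/
/-- Landau's function: the maximal order of an element of the symmetric group `S_n`. -/
noncomputable def landau (n : ℕ) : ℕ :=
  Finset.univ.sup fun σ : Equiv.Perm (Fin n) => orderOf σ


/-- A product of numbers that are all at least 2 is at least their sum. -/
lemma aux_sum_le_prod (s : Finset ℕ) (f : ℕ → ℕ) (h : ∀ x ∈ s, 2 ≤ f x) :
    ∑ x ∈ s, f x ≤ ∏ x ∈ s, f x := by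
  classical
  induction s using Finset.induction_on with
  | empty => simp
  | @insert a s' hx ih =>
    rw [Finset.sum_insert hx, Finset.prod_insert hx]
    have ha : 2 ≤ f a := h a (Finset.mem_insert_self a s')
    have hs : ∀ x ∈ s', 2 ≤ f x := fun x hxs => h x (Finset.mem_insert_of_mem hxs)
    have IH := ih hs
    rcases Finset.eq_empty_or_nonempty s' with rfl | hne
    · simp
    · have hP : 2 ≤ ∏ x ∈ s', f x := by
        obtain ⟨b, hb⟩ := hne
        calc 2 ≤ f b := hs b hb
        _ ≤ ∏ x ∈ s', f x := Finset.single_le_prod' (fun i hi => le_trans (by omega) (hs i hi)) hb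
      have : f a + ∑ x ∈ s', f x ≤ f a + ∏ x ∈ s', f x := by omega
      refine this.trans ?_
      nlinarith [ha, hP]

lemma aux_sq_le_two_pow (b : ℕ) (hb : 4 ≤ b) : b ^ 2 ≤ 2 ^ b := by
  induction b with
  | zero => omega
  | succ n ih =>
    rcases Nat.lt_or_ge n 4 with h | h
    · interval_cases n <;> simp_all
    · have h1 := ih (by omega)
      have : (n+1)^2 ≤ 2 * n^2 := by nlinarith
      calc (n+1)^2 ≤ 2 * n^2 := this
      _ ≤ 2 * 2^n := by omega
      _ = 2 ^ (n+1) := by ring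

/-- `q ^ p ≤ p ^ q` for `3 ≤ p ≤ q`. -/
lemma aux_pow_swap (p q : ℕ) (hp : 3 ≤ p) (hq : p ≤ q) : q ^ p ≤ p ^ q := by
  have hep : Real.exp 1 ≤ (p : ℝ) := by
    have := Real.exp_one_lt_d9
    have : Real.exp 1 < 3 := by linarith
    have h3 : (3:ℝ) ≤ (p:ℝ) := by exact_mod_cast hp
    linarith
  have heq : Real.exp 1 ≤ (q : ℝ) := by
    have : (p:ℝ) ≤ (q:ℝ) := by exact_mod_cast hq
    linarith
  have hkey := Real.log_div_self_antitoneOn (by exact hep) (by exact heq)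
    (by exact_mod_cast hq)
  -- hkey : log q / q ≤ log p / p
  have hppos : (0:ℝ) < p := by exact_mod_cast (by omega : 0 < p)
  have hqpos : (0:ℝ) < q := by exact_mod_cast (by omega : 0 < q)
  have h1 : (p:ℝ) * Real.log q ≤ (q:ℝ) * Real.log p := by
    rw [div_le_div_iff₀ hqpos hppos] at hkey
    nlinarith [hkey]
  have h2 : Real.log ((q:ℝ) ^ (p:ℕ)) ≤ Real.log ((p:ℝ) ^ (q:ℕ)) := by
    rw [Real.log_pow, Real.log_pow]
    linarith
  have h3 : ((q:ℝ) ^ (p:ℕ)) ≤ ((p:ℝ) ^ (q:ℕ)) := by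
    have hq1 : (0:ℝ) < (q:ℝ) ^ (p:ℕ) := by positivity
    have hp1 : (0:ℝ) < (p:ℝ) ^ (q:ℕ) := by positivity
    exact (Real.log_le_log_iff hq1 hp1).mp h2
  exact_mod_cast h3


/-- A product of prime powers with distinct prime bases, each dividing `M`, divides `M`. -/
lemma aux_prod_pow_dvd (s : Finset ℕ) (f : ℕ → ℕ) (M : ℕ)
    (hpr : ∀ q ∈ s, q.Prime) (hd : ∀ q ∈ s, q ^ f q ∣ M) :
    (∏ q ∈ s, q ^ f q) ∣ M := by
  classical
  induction s using Finset.induction_on with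
  | empty => simpa using one_dvd M
  | @insert a s' hx ih =>
    rw [Finset.prod_insert hx]
    have ha : a.Prime := hpr a (Finset.mem_insert_self a s')
    have hcop : Nat.Coprime (a ^ f a) (∏ q ∈ s', q ^ f q) := by
      apply Nat.Coprime.pow_left
      apply Nat.Coprime.prod_right
      intro q hq
      exact Nat.Coprime.pow_right _
        ((Nat.coprime_primes ha (hpr q (Finset.mem_insert_of_mem hq))).mpr
          (by rintro rfl; exact hx hq))
    exact hcop.mul_dvd_of_dvd_of_dvd (hd a (Finset.mem_insert_self a s'))
      (ih (fun q hq => hpr q (Finset.mem_insert_of_mem hq))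
          (fun q hq => hd q (Finset.mem_insert_of_mem hq)))

/-- Sum of maximal prime-power divisors (over a subset of prime factors) is at most the number. -/
lemma aux_sum_pow_le (a : ℕ) (ha : a ≠ 0) (A : Finset ℕ) (hA : A ⊆ a.primeFactors) :
    ∑ q ∈ A, q ^ a.factorization q ≤ a := by
  have hpr : ∀ q ∈ A, q.Prime := fun q hq => Nat.prime_of_mem_primeFactors (hA hq)
  have hdvd : (∏ q ∈ A, q ^ a.factorization q) ∣ a :=
    aux_prod_pow_dvd A _ a hpr (fun q _ => Nat.ordProj_dvd a q)
  have h2 : ∀ q ∈ A, 2 ≤ q ^ a.factorization q := by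
    intro q hq
    have hq1 : 1 ≤ a.factorization q := by
      have := hA hq
      rw [← Nat.support_factorization, Finsupp.mem_support_iff] at this
      omega
    calc 2 ≤ q ^ 1 := by simpa using (hpr q hq).two_le
    _ ≤ q ^ a.factorization q := Nat.pow_le_pow_right (hpr q hq).pos hq1
  exact (aux_sum_le_prod A _ h2).trans (Nat.le_of_dvd (Nat.pos_of_ne_zero ha) hdvd)

/-- Key combinatorial fact: the sum of the maximal prime powers dividing the lcm of a multiset
of positive naturals is at most the sum of the multiset. -/
lemma aux_sum_primePow_lcm_le (m : Multiset ℕ) (hm : ∀ c ∈ m, c ≠ 0) :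
    ∑ q ∈ m.lcm.primeFactors, q ^ m.lcm.factorization q ≤ m.sum := by
  classical
  induction m using Multiset.induction_on with
  | empty => simp [Multiset.lcm_zero]
  | cons a m' ih =>
    rename_i _ -- nothing
    have ha : a ≠ 0 := hm a (Multiset.mem_cons_self a m')
    have hm' : ∀ c ∈ m', c ≠ 0 := fun c hc => hm c (Multiset.mem_cons_of_mem hc)
    have hL' : m'.lcm ≠ 0 := by
      rw [Ne, Multiset.lcm_eq_zero_iff]
      intro h0; exact hm' 0 h0 rfl
    set L' := m'.lcm with hL'def
    have hlcm : (a ::ₘ m').lcm = Nat.lcm a L' := by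
      rw [Multiset.lcm_cons, lcm_eq_nat_lcm]
    set L := (a ::ₘ m').lcm with hLdef
    have hL0 : L ≠ 0 := by rw [hlcm]; exact Nat.lcm_ne_zero ha hL'
    have hfac : L.factorization = a.factorization ⊔ L'.factorization := by
      rw [hlcm]; exact Nat.factorization_lcm ha hL'
    set A := L.primeFactors.filter (fun q => L'.factorization q < a.factorization q) with hAdef
    set B := L.primeFactors.filter (fun q => ¬ L'.factorization q < a.factorization q) with hBdef
    have hsplit : ∑ q ∈ L.primeFactors, q ^ L.factorization q
        = ∑ q ∈ A, q ^ L.factorization q + ∑ q ∈ B, q ^ L.factorization q :=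
      (Finset.sum_filter_add_sum_filter_not _ _ _).symm
    have hAle : ∑ q ∈ A, q ^ L.factorization q ≤ a := by
      have hAsub : A ⊆ a.primeFactors := by
        intro q hq
        rw [hAdef, Finset.mem_filter] at hq
        rw [← Nat.support_factorization, Finsupp.mem_support_iff]
        omega
      have : ∀ q ∈ A, q ^ L.factorization q = q ^ a.factorization q := by
        intro q hq
        rw [hAdef, Finset.mem_filter] at hq
        rw [hfac, Finsupp.sup_apply]
        congr 1
        omega
      rw [Finset.sum_congr rfl this]
      exact aux_sum_pow_le a ha A hAsub
    have hBle : ∑ q ∈ B, q ^ L.factorization q ≤ m'.sum := by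
      have hBsub : B ⊆ L'.primeFactors := by
        intro q hq
        rw [hBdef, Finset.mem_filter] at hq
        obtain ⟨hqL, hqlt⟩ := hq
        rw [← Nat.support_factorization, Finsupp.mem_support_iff] at hqL ⊢
        rw [hfac, Finsupp.sup_apply] at hqL
        have hmax : a.factorization q ⊔ L'.factorization q
            = max (a.factorization q) (L'.factorization q) := rfl
        rw [hmax] at hqL
        omega
      have heq : ∀ q ∈ B, q ^ L.factorization q = q ^ L'.factorization q := by
        intro q hq
        rw [hBdef, Finset.mem_filter] at hq
        rw [hfac, Finsupp.sup_apply]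
        congr 1
        have hmax : a.factorization q ⊔ L'.factorization q
            = max (a.factorization q) (L'.factorization q) := rfl
        rw [hmax]
        omega
      rw [Finset.sum_congr rfl heq]
      calc ∑ q ∈ B, q ^ L'.factorization q ≤ ∑ q ∈ L'.primeFactors, q ^ L'.factorization q :=
        Finset.sum_le_sum_of_subset hBsub
      _ ≤ m'.sum := ih hm'
    rw [Multiset.sum_cons]
    omega



/-- cost of using exponent `c` on prime `q` -/
def auxE (q c : ℕ) : ℕ := if c = 0 then 0 else q ^ c

@[simp] lemma auxE_zero (q : ℕ) : auxE q 0 = 0 := rfl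
lemma auxE_ne (q c : ℕ) (hc : c ≠ 0) : auxE q c = q ^ c := if_neg hc

lemma aux_mul_le_pow (q b : ℕ) (hq : 2 ≤ q) (hb : 1 ≤ b) : q * b ≤ q ^ b := by
  have h1 : b ≤ 2 ^ (b - 1) := by
    have := @Nat.lt_two_pow_self (b - 1)
    omega
  calc q * b ≤ q * q ^ (b-1) := Nat.mul_le_mul_left q
        (h1.trans (Nat.pow_le_pow_left hq _))
  _ = q ^ (b - 1 + 1) := by ring
  _ = q ^ b := by congr 1; omega

lemma aux_big (p q b : ℕ) (hp : 3 ≤ p) (hpq : p < q) (hb : 1 ≤ b) :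
    q ^ (p * b) ≤ p ^ (q ^ b) := by
  have h1 : q ^ (p * b) = (q ^ p) ^ b := by rw [← pow_mul]
  have h2 : (q ^ p) ^ b ≤ (p ^ q) ^ b := Nat.pow_le_pow_left (aux_pow_swap p q hp hpq.le) b
  have h3 : (p ^ q) ^ b = p ^ (q * b) := by rw [← pow_mul]
  have h4 : p ^ (q * b) ≤ p ^ (q ^ b) :=
    Nat.pow_le_pow_right (by omega) (aux_mul_le_pow q b (by omega) hb)
  omega
lemma aux_small (p q b : ℕ) (hq2 : 2 ≤ q) (hqp : q < p) (hb : p + 4 ≤ b) :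
    q ^ (p * b) ≤ p ^ (q ^ b) := by
  have h1 : q ^ (p*b) ≤ p ^ (p*b) := Nat.pow_le_pow_left hqp.le _
  have h2 : p * b ≤ q ^ b := by
    have h3 : b ^ 2 ≤ 2 ^ b := aux_sq_le_two_pow b (by omega)
    have h4 : (2:ℕ) ^ b ≤ q ^ b := Nat.pow_le_pow_left hq2 b
    have : p * b ≤ b * b := Nat.mul_le_mul_right b (by omega)
    nlinarith
  exact h1.trans (Nat.pow_le_pow_right (by omega) h2)

lemma aux_general (p : ℕ) (hp : p.Prime) (hp3 : 3 ≤ p) :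
    ∃ n N : ℕ, 0 < n ∧ landau n = N ∧ p ∈ N.primeFactors ∧ ∀ q ∈ N.primeFactors, q ≤ p := by
  classical
  -- existence of optimal exponents for small primes
  have hgood : ∀ q : ℕ, q.Prime → q < p →
      ∃ a : ℕ, ∀ b : ℕ, q ^ (p*b) * p ^ (auxE q a) ≤ q ^ (p*a) * p ^ (auxE q b) := by
    intro q hq hqp
    have hq2 := hq.two_le
    have hppos : (0:ℚ) < (p:ℚ) := by exact_mod_cast hp.pos
    set g : ℕ → ℚ := fun c => (q:ℚ) ^ (p*c) / (p:ℚ) ^ (auxE q c) with hg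
    have hconv : ∀ x y : ℕ, g x ≤ g y ↔
        q ^ (p*x) * p ^ (auxE q y) ≤ q ^ (p*y) * p ^ (auxE q x) := by
      intro x y
      rw [hg]
      simp only
      rw [div_le_div_iff₀ (by positivity) (by positivity)]
      constructor
      · intro h; exact_mod_cast h
      · intro h; exact_mod_cast h
    obtain ⟨a, haS, ha⟩ := Finset.exists_max_image (Finset.range (p+5)) g
      ⟨0, Finset.mem_range.mpr (by omega)⟩
    refine ⟨a, fun b => ?_⟩
    rw [← hconv]
    by_cases hb : b ∈ Finset.range (p+5)
    · exact ha b hb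
    · have hb5 : p + 4 ≤ b := by
        rw [Finset.mem_range] at hb; omega
      have h1 : g b ≤ g 0 := by
        rw [hconv]
        simp only [Nat.mul_zero, pow_zero, one_mul, auxE_zero, mul_one]
        rw [auxE_ne q b (by omega)]
        exact aux_small p q b hq2 hqp hb5
      exact h1.trans (ha 0 (Finset.mem_range.mpr (by omega)))
  set a : ℕ → ℕ := fun q => if q = p then 1 else
    if h : q.Prime ∧ q < p then (hgood q h.1 h.2).choose else 0 with hadef
  have hap : a p = 1 := by simp [hadef]
  have hR : ∀ q : ℕ, q.Prime → ∀ b : ℕ,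
      q ^ (p*b) * p ^ (auxE q (a q)) ≤ q ^ (p*(a q)) * p ^ (auxE q b) := by
    intro q hq b
    rcases lt_trichotomy q p with hlt | heq | hgt
    · have haq : a q = (hgood q hq hlt).choose := by
        show (if q = p then 1 else if h : q.Prime ∧ q < p then (hgood q h.1 h.2).choose else 0)
          = (hgood q hq hlt).choose
        rw [if_neg (Nat.ne_of_lt hlt), dif_pos ⟨hq, hlt⟩]
      rw [haq]
      exact (hgood q hq hlt).choose_spec b
    · subst heq
      rw [hap]
      rcases Nat.eq_zero_or_pos b with rfl | hb
      · rw [auxE_ne q 1 one_ne_zero, pow_one]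
        simp
      · rw [auxE_ne q 1 one_ne_zero, auxE_ne q b (by omega), pow_one,
          ← pow_add, ← pow_add]
        apply Nat.pow_le_pow_right hq.pos
        have := aux_mul_le_pow q b hq.two_le hb
        omega
    · have haq : a q = 0 := by
        show (if q = p then 1 else if h : q.Prime ∧ q < p then (hgood q h.1 h.2).choose else 0) = 0
        rw [if_neg (by omega : q ≠ p), dif_neg (fun h => absurd h.2 (by omega))]
      rw [haq]
      rcases Nat.eq_zero_or_pos b with rfl | hb
      · simp
      · simp only [auxE_zero, pow_zero, mul_one, Nat.mul_zero, one_mul]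
        rw [auxE_ne q b (by omega)]
        exact aux_big p q b hp3 hgt hb
  -- the support of our exponent system
  set Q' : Finset ℕ := ((Finset.range (p+1)).filter Nat.Prime).filter (fun q => a q ≠ 0)
    with hQ'
  have hprQ' : ∀ q ∈ Q', q.Prime ∧ q ≤ p ∧ a q ≠ 0 := by
    intro q hq
    rw [hQ', Finset.mem_filter, Finset.mem_filter, Finset.mem_range] at hq
    exact ⟨hq.1.2, by omega, hq.2⟩
  have hpQ' : p ∈ Q' := by
    rw [hQ', Finset.mem_filter, Finset.mem_filter, Finset.mem_range]
    refine ⟨⟨by omega, hp⟩, by rw [hap]; omega⟩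
  have hmemQ' : ∀ q : ℕ, q.Prime → a q ≠ 0 → q ∈ Q' := by
    intro q hq ha0
    have hqle : q ≤ p := by
      by_contra hgt
      apply ha0
      show (if q = p then 1 else if h : q.Prime ∧ q < p then (hgood q h.1 h.2).choose else 0) = 0
      rw [if_neg (by omega : q ≠ p), dif_neg (fun h => absurd h.2 (by omega))]
    rw [hQ', Finset.mem_filter, Finset.mem_filter, Finset.mem_range]
    exact ⟨⟨by omega, hq⟩, ha0⟩
  set n := ∑ q ∈ Q', q ^ a q with hn
  set N := ∏ q ∈ Q', q ^ a q with hN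
  have hpn : p ≤ n := by
    calc p = p ^ a p := by rw [hap, pow_one]
    _ ≤ n := Finset.single_le_sum (f := fun q => q ^ a q) (fun q _ => Nat.zero_le _) hpQ'
  have hn0 : 0 < n := by have := hp.two_le; omega
  have hN0 : 0 < N := Finset.prod_pos (fun q hq => pow_pos (hprQ' q hq).1.pos _)
  -- upper bound : every permutation of `Fin n` has order at most `N`
  have hupper : ∀ σ : Equiv.Perm (Fin n), orderOf σ ≤ N := by
    intro σ
    set L := orderOf σ with hLdef
    have hL0 : L ≠ 0 := (orderOf_pos σ).ne'
    have hSig : ∑ q ∈ L.primeFactors, q ^ L.factorization q ≤ n := by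
      have hcyc := Equiv.Perm.lcm_cycleType σ
      have hmem : ∀ c ∈ σ.cycleType, c ≠ 0 := fun c hc => by
        have := Equiv.Perm.two_le_of_mem_cycleType hc; omega
      have h1 := aux_sum_primePow_lcm_le σ.cycleType hmem
      rw [hcyc] at h1
      calc ∑ q ∈ L.primeFactors, q ^ L.factorization q ≤ σ.cycleType.sum := h1
      _ = σ.support.card := Equiv.Perm.sum_cycleType σ
      _ ≤ Fintype.card (Fin n) := Finset.card_le_univ _
      _ = n := Fintype.card_fin n
    set U := L.primeFactors ∪ Q' with hU
    have hUprime : ∀ q ∈ U, q.Prime := by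
      intro q hq
      rcases Finset.mem_union.mp hq with h | h
      · exact Nat.prime_of_mem_primeFactors h
      · exact (hprQ' q h).1
    have key : ∏ q ∈ U, (q ^ (p * L.factorization q) * p ^ auxE q (a q))
        ≤ ∏ q ∈ U, (q ^ (p * a q) * p ^ auxE q (L.factorization q)) :=
      Finset.prod_le_prod' fun q hq => hR q (hUprime q hq) (L.factorization q)
    have hprodv : ∏ q ∈ U, q ^ L.factorization q = L := by
      have h1 : ∏ q ∈ L.primeFactors, q ^ L.factorization q
          = ∏ q ∈ U, q ^ L.factorization q :=
        Finset.prod_subset Finset.subset_union_left (fun q _ hq => by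
          have h0 : L.factorization q = 0 := by
            rw [← Nat.support_factorization] at hq
            exact Finsupp.notMem_support_iff.mp hq
          rw [h0, pow_zero])
      rw [← h1]
      conv_rhs => rw [← Nat.factorization_prod_pow_eq_self hL0]
      rfl
    have hprodA : ∏ q ∈ U, q ^ a q = N := by
      rw [hN]
      refine (Finset.prod_subset Finset.subset_union_right (fun q hq hq' => ?_)).symm
      have h0 : a q = 0 := by
        by_contra h0
        exact hq' (hmemQ' q (hUprime q hq) h0)
      rw [h0, pow_zero]
    have hsuma : ∑ q ∈ U, auxE q (a q) = n := by
      rw [hn]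
      have h1 : ∑ q ∈ Q', q ^ a q = ∑ q ∈ Q', auxE q (a q) :=
        Finset.sum_congr rfl (fun q hq => (auxE_ne q (a q) (hprQ' q hq).2.2).symm)
      rw [h1]
      refine (Finset.sum_subset Finset.subset_union_right (fun q hq hq' => ?_)).symm
      have h0 : a q = 0 := by
        by_contra h0
        exact hq' (hmemQ' q (hUprime q hq) h0)
      rw [h0, auxE_zero]
    have hsumv : ∑ q ∈ U, auxE q (L.factorization q)
        = ∑ q ∈ L.primeFactors, q ^ L.factorization q := by
      have h1 : ∑ q ∈ L.primeFactors, q ^ L.factorization q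
          = ∑ q ∈ L.primeFactors, auxE q (L.factorization q) :=
        Finset.sum_congr rfl (fun q hq => by
          rw [auxE_ne]
          rw [← Nat.support_factorization] at hq
          exact Finsupp.mem_support_iff.mp hq)
      rw [h1]
      refine (Finset.sum_subset Finset.subset_union_left (fun q hq hq' => ?_)).symm
      have h0 : L.factorization q = 0 := by
        rw [← Nat.support_factorization] at hq'
        exact Finsupp.notMem_support_iff.mp hq'
      rw [h0, auxE_zero]
    have lhs_eq : ∏ q ∈ U, (q ^ (p * L.factorization q) * p ^ auxE q (a q))
        = L ^ p * p ^ n := by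
      rw [Finset.prod_mul_distrib]
      congr 1
      · have h2 : ∀ q ∈ U, q ^ (p * L.factorization q) = (q ^ L.factorization q) ^ p := by
          intro q _
          rw [← pow_mul, mul_comm]
        rw [Finset.prod_congr rfl h2, Finset.prod_pow, hprodv]
      · rw [Finset.prod_pow_eq_pow_sum, hsuma]
    have rhs_eq : ∏ q ∈ U, (q ^ (p * a q) * p ^ auxE q (L.factorization q))
        = N ^ p * p ^ (∑ q ∈ L.primeFactors, q ^ L.factorization q) := by
      rw [Finset.prod_mul_distrib]
      congr 1
      · have h2 : ∀ q ∈ U, q ^ (p * a q) = (q ^ a q) ^ p := by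
          intro q _
          rw [← pow_mul, mul_comm]
        rw [Finset.prod_congr rfl h2, Finset.prod_pow, hprodA]
      · rw [Finset.prod_pow_eq_pow_sum, hsumv]
    rw [lhs_eq, rhs_eq] at key
    have key2 : L ^ p * p ^ n ≤ N ^ p * p ^ n :=
      key.trans (Nat.mul_le_mul_left _ (Nat.pow_le_pow_right hp.pos hSig))
    have hLN : L ^ p ≤ N ^ p :=
      Nat.le_of_mul_le_mul_right key2 (pow_pos hp.pos n)
    exact (Nat.pow_le_pow_iff_left (by omega : p ≠ 0)).mp hLN
  -- lower bound : there is a permutation of order `N`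
  have hlower : N ≤ landau n := by
    set m : Multiset ℕ := Q'.val.map (fun q => q ^ a q) with hm
    have hmsum : m.sum = n := rfl
    have hm2 : ∀ c ∈ m, 2 ≤ c := by
      intro c hc
      rw [hm, Multiset.mem_map] at hc
      obtain ⟨q, hq, rfl⟩ := hc
      have hq' := hprQ' q hq
      calc 2 ≤ q ^ 1 := by rw [pow_one]; exact hq'.1.two_le
      _ ≤ q ^ a q := Nat.pow_le_pow_right hq'.1.pos (by omega)
    obtain ⟨σ, hσ⟩ := (Equiv.Perm.exists_with_cycleType_iff (Fin n)).mpr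
      ⟨by rw [hmsum, Fintype.card_fin], hm2⟩
    have hord : orderOf σ = m.lcm := by
      rw [← Equiv.Perm.lcm_cycleType, hσ]
    have hNdvd : N ∣ m.lcm := by
      rw [hN]
      refine aux_prod_pow_dvd Q' a m.lcm (fun q hq => (hprQ' q hq).1) (fun q hq => ?_)
      exact Multiset.dvd_lcm (Multiset.mem_map_of_mem _ hq)
    have hpos : 0 < orderOf σ := orderOf_pos σ
    have : N ≤ orderOf σ := by
      rw [hord] at hpos ⊢
      exact Nat.le_of_dvd hpos hNdvd
    exact this.trans (Finset.le_sup (Finset.mem_univ σ))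
  have hlan : landau n = N := le_antisymm (Finset.sup_le (fun σ _ => hupper σ)) hlower
  refine ⟨n, N, hn0, hlan, ?_, ?_⟩
  · refine Nat.mem_primeFactors.mpr ⟨hp, ?_, by omega⟩
    have h1 : p ^ a p ∣ N := by
      rw [hN]
      exact Finset.dvd_prod_of_mem _ hpQ'
    rw [hap, pow_one] at h1
    exact h1
  · intro q hq
    rw [Nat.mem_primeFactors] at hq
    obtain ⟨hqpr, hqdvd, -⟩ := hq
    rw [hN] at hqdvd
    obtain ⟨r, hr, hqr⟩ := (hqpr.prime.dvd_finset_prod_iff _).mp hqdvd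
    have hrq : q = r := by
      have := hqpr.prime.dvd_of_dvd_pow hqr
      exact ((Nat.prime_dvd_prime_iff_eq hqpr (hprQ' r hr).1).mp this)
    rw [hrq]
    exact (hprQ' r hr).2.1


lemma landau_two : landau 2 = 2 := by
  apply le_antisymm
  · apply Finset.sup_le
    intro σ _
    have h := orderOf_dvd_card (G := Equiv.Perm (Fin 2)) (x := σ)
    rw [Fintype.card_perm, Fintype.card_fin] at h
    have h2 : orderOf σ ∣ 2 := by
      simpa [Nat.factorial] using h
    exact Nat.le_of_dvd (by norm_num) h2
  · haveI : Fact (Nat.Prime 2) := ⟨Nat.prime_two⟩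
    have hsw : orderOf (Equiv.swap (0 : Fin 2) 1) = 2 := by
      apply orderOf_eq_prime
      · rw [pow_two]; exact Equiv.swap_mul_self _ _
      · intro h
        have h0 := congrArg (fun e : Equiv.Perm (Fin 2) => e 0) h
        simp [Equiv.swap_apply_left] at h0
    calc (2:ℕ) = orderOf (Equiv.swap (0 : Fin 2) 1) := hsw.symm
    _ ≤ landau 2 := Finset.le_sup (Finset.mem_univ _)

/-- For every prime `p` there exists a positive integer `n` such that the
largest prime factor of `g(n)` equals `p`. -/
theorem exists_landau_maxPrimeFactor_eq (p : ℕ) (hp : p.Prime) :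
    ∃ n : ℕ, 0 < n ∧ p ∈ (landau n).primeFactors ∧
      ∀ q ∈ (landau n).primeFactors, q ≤ p := by
  rcases Nat.lt_or_ge p 3 with h3 | h3
  · have hp2 : p = 2 := by have := hp.two_le; omega
    subst hp2
    refine ⟨2, by norm_num, ?_, ?_⟩
    · rw [landau_two]
      exact Nat.mem_primeFactors.mpr ⟨Nat.prime_two, dvd_rfl, by norm_num⟩
    · intro q hq
      rw [landau_two, Nat.Prime.primeFactors Nat.prime_two] at hq
      simp at hq
      omega
  · obtain ⟨n, N, hn0, hlan, hpN, hmax⟩ := aux_general p hp h3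
    refine ⟨n, hn0, ?_, ?_⟩
    · rw [hlan]; exact hpN
    · rw [hlan]; exact hmax
end

section
/- Let x be a positive real number, k ≥ 1, and let a_1, …, a_k, b_1, …, b_k be real numbers with 0 < b_k ≤ b_{k−1} ≤ … ≤ b_1 ≤ x < a_1 ≤ a_2 ≤ … ≤ a_k. Set Δ = ∑_{i=1}^{k} (a_i − b_i). Then (x + Δ)/x ≤ ∏_{i=1}^{k} a_i/b_i ≤ exp(Δ/b_k). -/
lemma weierstrass_aux (s : Finset ℕ) (f : ℕ → ℝ) (hf : ∀ i ∈ s, 0 ≤ f i) :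
    1 + ∑ i ∈ s, f i ≤ ∏ i ∈ s, (1 + f i) := by
  induction s using Finset.cons_induction with
  | empty => simp
  | cons j s hj ih =>
    rw [Finset.sum_cons, Finset.prod_cons]
    have h0 : 0 ≤ f j := hf j (Finset.mem_cons_self j s)
    have hs : ∀ i ∈ s, 0 ≤ f i := fun i hi => hf i (Finset.mem_cons_of_mem hi)
    have h1 : 1 + ∑ i ∈ s, f i ≤ ∏ i ∈ s, (1 + f i) := ih hs
    have hsum : 0 ≤ ∑ i ∈ s, f i := Finset.sum_nonneg hs
    nlinarith [mul_le_mul_of_nonneg_left h1 h0]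

/-- Let `x > 0`, `k ≥ 1` and
`0 < b_k ≤ b_{k-1} ≤ ⋯ ≤ b_1 ≤ x < a_1 ≤ a_2 ≤ ⋯ ≤ a_k`. With
`Δ = ∑_{i=1}^k (a_i - b_i)`, one has `(x + Δ)/x ≤ ∏_{i=1}^k a_i/b_i ≤ exp(Δ/b_k)`. -/
theorem prod_ratio_bounds (x : ℝ) (hx : 0 < x) (k : ℕ) (hk : 1 ≤ k) (a b : ℕ → ℝ)
    (hbk : 0 < b k)
    (hb : ∀ i, 1 ≤ i → i < k → b (i + 1) ≤ b i)
    (hb1 : b 1 ≤ x) (ha1 : x < a 1)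
    (ha : ∀ i, 1 ≤ i → i < k → a i ≤ a (i + 1)) :
    (x + ∑ i ∈ Finset.Icc 1 k, (a i - b i)) / x ≤ ∏ i ∈ Finset.Icc 1 k, a i / b i ∧
      ∏ i ∈ Finset.Icc 1 k, a i / b i ≤
        Real.exp ((∑ i ∈ Finset.Icc 1 k, (a i - b i)) / b k) := by
  have hbdec : ∀ i j : ℕ, 1 ≤ i → i ≤ j → j ≤ k → b j ≤ b i := by
    intro i j hi hij
    induction j, hij using Nat.le_induction with
    | base => intro _; exact le_rfl
    | succ n hn ihn =>
      intro hjk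
      exact le_trans (hb n (hi.trans hn) (by omega)) (ihn (by omega))
  have hainc : ∀ i j : ℕ, 1 ≤ i → i ≤ j → j ≤ k → a i ≤ a j := by
    intro i j hi hij
    induction j, hij using Nat.le_induction with
    | base => intro _; exact le_rfl
    | succ n hn ihn =>
      intro hjk
      exact le_trans (ihn (by omega)) (ha n (hi.trans hn) (by omega))
  -- basic facts for all i in [1,k]
  have hfacts : ∀ i ∈ Finset.Icc 1 k, 0 < b i ∧ b i ≤ x ∧ x < a i := by
    intro i hi
    rw [Finset.mem_Icc] at hi
    refine ⟨lt_of_lt_of_le hbk (hbdec i k hi.1 hi.2 le_rfl), ?_, ?_⟩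
    · exact le_trans (hbdec 1 i le_rfl hi.1 hi.2) hb1
    · exact lt_of_lt_of_le ha1 (hainc 1 i le_rfl hi.1 hi.2)
  constructor
  · -- lower bound
    rw [div_le_iff₀ hx]
    have h1 : ∀ i ∈ Finset.Icc 1 k, 1 + (a i - b i) / x ≤ a i / b i := by
      intro i hi
      obtain ⟨hbi, hbix, hxai⟩ := hfacts i hi
      have hnn : (0:ℝ) ≤ a i - b i := by linarith
      have hd : (a i - b i) / x ≤ (a i - b i) / b i := by gcongr
      have he : 1 + (a i - b i) / b i = a i / b i := by field_simp; ring
      linarith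
    have h2 : 1 + ∑ i ∈ Finset.Icc 1 k, (a i - b i) / x ≤
        ∏ i ∈ Finset.Icc 1 k, (1 + (a i - b i) / x) := by
      apply weierstrass_aux
      intro i hi
      obtain ⟨hbi, hbix, hxai⟩ := hfacts i hi
      have : (0:ℝ) ≤ a i - b i := by linarith
      positivity
    have h3 : ∏ i ∈ Finset.Icc 1 k, (1 + (a i - b i) / x) ≤
        ∏ i ∈ Finset.Icc 1 k, a i / b i := by
      apply Finset.prod_le_prod
      · intro i hi
        obtain ⟨hbi, hbix, hxai⟩ := hfacts i hi
        have : (0:ℝ) ≤ a i - b i := by linarith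
        positivity
      · exact h1
    have := h2.trans h3
    rw [← Finset.sum_div] at this
    have h4 : x + ∑ i ∈ Finset.Icc 1 k, (a i - b i) =
        (1 + (∑ i ∈ Finset.Icc 1 k, (a i - b i)) / x) * x := by
      field_simp
    rw [h4]
    exact mul_le_mul_of_nonneg_right this hx.le
  · -- upper bound
    rw [Finset.sum_div, Real.exp_sum]
    apply Finset.prod_le_prod
    · intro i hi
      obtain ⟨hbi, hbix, hxai⟩ := hfacts i hi
      have : (0:ℝ) < a i := hx.trans hxai
      positivity
    · intro i hi
      obtain ⟨hbi, hbix, hxai⟩ := hfacts i hi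
      have hik : i ≤ k := (Finset.mem_Icc.mp hi).2
      have h1i : 1 ≤ i := (Finset.mem_Icc.mp hi).1
      have hbk_le : b k ≤ b i := hbdec i k h1i hik le_rfl
      have step1 : a i / b i ≤ 1 + (a i - b i) / b k := by
        rw [div_le_iff₀ hbi]
        have hnn : 0 ≤ a i - b i := by linarith
        have : (a i - b i) / b k * b i ≥ a i - b i := by
          rw [ge_iff_le, div_mul_eq_mul_div, le_div_iff₀ hbk]
          nlinarith
        nlinarith
      calc a i / b i ≤ 1 + (a i - b i) / b k := step1
        _ ≤ Real.exp ((a i - b i) / b k) := by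
            have := Real.add_one_le_exp ((a i - b i) / b k); linarith
end

section
/- A positive integer M is a value of Landau's function (i.e., there exists n with M = g(n)) if and only if every integer M′ > M satisfies ℓ(M′) > ℓ(M). -/
/-- The additive function `ℓ` with `ℓ(1) = 0` and `ℓ(p^k) = p^k` for primes `p` and `k ≥ 1`. -/
def ell (M : ℕ) : ℕ := ∑ p ∈ M.primeFactors, p ^ M.factorization p

lemma ell_one : ell 1 = 0 := by simp [ell]

lemma ell_prime_pow {p k : ℕ} (hp : p.Prime) (hk : k ≠ 0) : ell (p ^ k) = p ^ k := by
  simp [ell, Nat.primeFactors_prime_pow hk hp, hp.factorization_pow, hp.factorization]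

lemma ell_mul_coprime {a b : ℕ} (ha : a ≠ 0) (hb : b ≠ 0) (h : Nat.Coprime a b) :
    ell (a * b) = ell a + ell b := by
  have hd := Nat.Coprime.disjoint_primeFactors h
  rw [ell, Nat.primeFactors_mul ha hb, Finset.sum_union hd, ell, ell]
  congr 1
  · refine Finset.sum_congr rfl fun p hp => ?_
    rw [Nat.factorization_mul ha hb]
    have h1 : p ∉ b.primeFactors := Finset.disjoint_left.mp hd hp
    rw [← Nat.support_factorization] at h1
    have : b.factorization p = 0 := Finsupp.notMem_support_iff.mp h1
    simp [this]
  · refine Finset.sum_congr rfl fun p hp => ?_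
    rw [Nat.factorization_mul ha hb]
    have h1 : p ∉ a.primeFactors := Finset.disjoint_right.mp hd hp
    rw [← Nat.support_factorization] at h1
    have : a.factorization p = 0 := Finsupp.notMem_support_iff.mp h1
    simp [this]

lemma sum_le_prod_of_two_le {s : Finset ℕ} {f : ℕ → ℕ} (h : ∀ p ∈ s, 2 ≤ f p) :
    ∑ p ∈ s, f p ≤ ∏ p ∈ s, f p := by
  induction s using Finset.cons_induction with
  | empty => simp
  | cons a s ha ih =>
    rw [Finset.sum_cons, Finset.prod_cons]
    have h2 : 2 ≤ f a := h a (Finset.mem_cons_self a s)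
    have ihs := ih fun p hp => h p (Finset.mem_cons_of_mem hp)
    rcases s.eq_empty_or_nonempty with rfl | hs
    · simp
    · have hP : 2 ≤ ∏ p ∈ s, f p := by
        obtain ⟨b, hb⟩ := hs
        calc 2 ≤ f b := h b (Finset.mem_cons_of_mem hb)
        _ ≤ ∏ p ∈ s, f p := Finset.single_le_prod' (fun p hp => Nat.le_of_lt
            (h p (Finset.mem_cons_of_mem hp))) hb
      calc f a + ∑ p ∈ s, f p ≤ f a + ∏ p ∈ s, f p := by omega
      _ ≤ f a * ∏ p ∈ s, f p := by nlinarith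

lemma ell_le_self (a : ℕ) : ell a ≤ a := by
  rcases Nat.eq_zero_or_pos a with rfl | ha
  · simp [ell]
  calc ell a ≤ ∏ p ∈ a.primeFactors, p ^ a.factorization p := by
        apply sum_le_prod_of_two_le
        intro p hp
        have hp2 := (Nat.prime_of_mem_primeFactors hp).two_le
        have hk : a.factorization p ≠ 0 := by
          rw [← Nat.support_factorization] at hp
          exact Finsupp.mem_support_iff.mp hp
        calc 2 ≤ p := hp2
        _ = p ^ 1 := (pow_one p).symm
        _ ≤ p ^ a.factorization p := Nat.pow_le_pow_right (by omega) (by omega)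
  _ = a := by
        rw [← Nat.support_factorization, ← Finsupp.prod]
        exact Nat.factorization_prod_pow_eq_self ha.ne'

lemma ell_lcm_le (a b : ℕ) : ell (Nat.lcm a b) ≤ ell a + ell b := by
  rcases Nat.eq_zero_or_pos a with rfl | ha
  · simp [ell]
  rcases Nat.eq_zero_or_pos b with rfl | hb
  · simp [ell]
  set L := Nat.lcm a b with hL
  have hL0 : L ≠ 0 := Nat.lcm_ne_zero ha.ne' hb.ne'
  have hfac : L.factorization = a.factorization ⊔ b.factorization :=
    Nat.factorization_lcm ha.ne' hb.ne'
  rw [ell]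
  rw [← Finset.sum_filter_add_sum_filter_not L.primeFactors
    (fun p => b.factorization p ≤ a.factorization p)]
  gcongr ?_ + ?_
  · calc ∑ p ∈ L.primeFactors.filter (fun p => b.factorization p ≤ a.factorization p),
        p ^ L.factorization p
        = ∑ p ∈ L.primeFactors.filter (fun p => b.factorization p ≤ a.factorization p),
          p ^ a.factorization p := by
          refine Finset.sum_congr rfl fun p hp => ?_
          have := (Finset.mem_filter.mp hp).2
          rw [hfac]; simp [sup_of_le_left this]
    _ ≤ ell a := by
          apply Finset.sum_le_sum_of_subset
          intro p hp
          rw [Finset.mem_filter] at hp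
          obtain ⟨hpL, hle⟩ := hp
          rw [← Nat.support_factorization, Finsupp.mem_support_iff]
          have : L.factorization p ≠ 0 := by
            rw [← Finsupp.mem_support_iff, Nat.support_factorization]; exact hpL
          rw [hfac] at this
          simp only [Finsupp.sup_apply] at this
          omega
  · calc ∑ p ∈ L.primeFactors.filter (fun p => ¬ b.factorization p ≤ a.factorization p),
        p ^ L.factorization p
        = ∑ p ∈ L.primeFactors.filter (fun p => ¬ b.factorization p ≤ a.factorization p),
          p ^ b.factorization p := by
          refine Finset.sum_congr rfl fun p hp => ?_
          have := (Finset.mem_filter.mp hp).2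
          rw [hfac]; simp [sup_of_le_right (le_of_not_ge this)]
    _ ≤ ell b := by
          apply Finset.sum_le_sum_of_subset
          intro p hp
          rw [Finset.mem_filter] at hp
          rw [← Nat.support_factorization, Finsupp.mem_support_iff]
          omega

lemma ell_multiset_lcm_le (s : Multiset ℕ) : ell s.lcm ≤ s.sum := by
  induction s using Multiset.induction with
  | empty => simp [ell_one]
  | cons a s ih =>
    rw [Multiset.lcm_cons, Multiset.sum_cons]
    calc ell (Nat.lcm a s.lcm) ≤ ell a + ell s.lcm := ell_lcm_le a s.lcm
    _ ≤ a + s.sum := Nat.add_le_add (ell_le_self a) ih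

lemma orderOf_finRotate' {m : ℕ} (hm : 2 ≤ m) : orderOf (finRotate m) = m := by
  have hc : (finRotate m).IsCycle := by
    obtain ⟨j, rfl⟩ : ∃ j, m = j + 2 := ⟨m - 2, by omega⟩
    exact isCycle_finRotate
  rw [hc.orderOf, support_finRotate_of_le hm, Finset.card_univ, Fintype.card_fin]

def permCongrMulEquiv {α β : Type*} (e : α ≃ β) : Equiv.Perm α ≃* Equiv.Perm β :=
  { Equiv.permCongr e with
    map_mul' := fun σ τ => Equiv.ext fun x => by
      simp [Equiv.permCongr_apply, Equiv.Perm.mul_apply] }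

lemma exists_perm_orderOf (M : ℕ) : M ≠ 0 →
    ∃ σ : Equiv.Perm (Fin (ell M)), orderOf σ = M := by
  induction M using Nat.strong_induction_on with
  | _ M ih =>
  intro hM
  rcases eq_or_ne M 1 with rfl | h1
  · exact ⟨1, by simp⟩
  set p := M.minFac with hpdef
  have hp : p.Prime := Nat.minFac_prime h1
  set k := M.factorization p with hkdef
  have hk : k ≠ 0 := (Nat.Prime.factorization_pos_of_dvd hp hM (Nat.minFac_dvd M)).ne'
  set M' := ordCompl[p] M with hM'def
  have hM'0 : M' ≠ 0 := (Nat.ordCompl_pos p hM).ne'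
  have heq : p ^ k * M' = M := Nat.ordProj_mul_ordCompl_eq_self M p
  have hcop : Nat.Coprime (p ^ k) M' :=
    Nat.Coprime.pow_left k (Nat.coprime_ordCompl hp hM)
  have hpk2 : 2 ≤ p ^ k := by
    calc 2 ≤ p := hp.two_le
    _ = p ^ 1 := (pow_one p).symm
    _ ≤ p ^ k := Nat.pow_le_pow_right hp.pos (by omega)
  have hlt : M' < M := by nlinarith [Nat.pos_of_ne_zero hM'0]
  obtain ⟨σ', hσ'⟩ := ih M' hlt hM'0
  have hellM : ell M = p ^ k + ell M' := by
    rw [← heq, ell_mul_coprime (pow_ne_zero _ hp.pos.ne') hM'0 hcop, ell_prime_pow hp hk]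
  have hτ : orderOf (finRotate (p ^ k)) = p ^ k := orderOf_finRotate' hpk2
  set e : Fin (p ^ k) ⊕ Fin (ell M') ≃ Fin (ell M) :=
    finSumFinEquiv.trans (finCongr hellM.symm) with hedef
  refine ⟨(permCongrMulEquiv e) ((Equiv.Perm.sumCongrHom _ _) (finRotate (p ^ k), σ')), ?_⟩
  have h2 := orderOf_injective (permCongrMulEquiv e).toMonoidHom
    (permCongrMulEquiv e).injective
    ((Equiv.Perm.sumCongrHom _ _) (finRotate (p ^ k), σ'))
  simp only [MulEquiv.toMonoidHom_eq_coe, MonoidHom.coe_coe] at h2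
  rw [h2, orderOf_injective _ Equiv.Perm.sumCongrHom_injective, Prod.orderOf]
  simp only [hτ, hσ']
  rw [Nat.Coprime.lcm_eq_mul hcop, heq]


lemma ell_orderOf_le {n : ℕ} (σ : Equiv.Perm (Fin n)) : ell (orderOf σ) ≤ n := by
  rw [← Equiv.Perm.lcm_cycleType]
  calc ell σ.cycleType.lcm ≤ σ.cycleType.sum := ell_multiset_lcm_le _
  _ = σ.support.card := Equiv.Perm.sum_cycleType σ
  _ ≤ n := by simpa using Finset.card_le_univ σ.support

lemma exists_perm_of_ell_le {M n : ℕ} (hM : M ≠ 0) (h : ell M ≤ n) :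
    ∃ σ : Equiv.Perm (Fin n), orderOf σ = M := by
  obtain ⟨σ₀, hσ₀⟩ := exists_perm_orderOf M hM
  refine ⟨Equiv.Perm.viaEmbeddingHom (Fin.castLEEmb h) σ₀, ?_⟩
  rw [orderOf_injective _ (Equiv.Perm.viaEmbeddingHom_injective (Fin.castLEEmb h)), hσ₀]

/-- A positive integer `M` is a value of Landau's function if and only if
every integer `M' > M` satisfies `ℓ(M') > ℓ(M)`. -/
theorem mem_range_landau_iff (M : ℕ) (hM : 1 ≤ M) :
    (∃ n : ℕ, M = landau n) ↔ ∀ M' : ℕ, M < M' → ell M < ell M' := by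
  constructor
  · rintro ⟨n, rfl⟩ M' hlt
    obtain ⟨σ, -, hσ⟩ := Finset.exists_mem_eq_sup Finset.univ Finset.univ_nonempty
      (fun σ : Equiv.Perm (Fin n) => orderOf σ)
    have hle : ell (landau n) ≤ n := by rw [landau, hσ]; exact ell_orderOf_le σ
    by_contra hcon
    push_neg at hcon
    obtain ⟨τ, hτ⟩ := exists_perm_of_ell_le (n := n) (M := M') (by omega)
      (le_trans hcon hle)
    have hle2 : orderOf τ ≤ landau n := Finset.le_sup (Finset.mem_univ τ)
    omega
  · intro h
    refine ⟨ell M, le_antisymm ?_ ?_⟩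
    · obtain ⟨τ, hτ⟩ := exists_perm_of_ell_le (n := ell M) (M := M) (by omega) le_rfl
      have hle : orderOf τ ≤ landau (ell M) := Finset.le_sup (Finset.mem_univ τ)
      omega
    · apply Finset.sup_le
      intro σ _
      by_contra hcon
      push_neg at hcon
      have h1 := h _ hcon
      have h2 := ell_orderOf_le σ
      omega
end

section
/- Let ρ > 2/log 2 and let x > 4 be the unique real with ρ = x/log x. Then for every prime p ≤ x the exponent α_p of p in N_ρ satisfies p^{α_p} ≤ x; consequently N_ρ divides the least common multiple of the integers 1, 2, …, ⌊x⌋. -/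
/-- `(ℓ(p^k) - ℓ(p^{k-1})) / log p`, the cost of raising the exponent of `p` from `k-1` to `k`. -/
noncomputable def ellCost (p k : ℕ) : ℝ :=
  ((ell (p ^ k) : ℝ) - (ell (p ^ (k - 1)) : ℝ)) / Real.log p

/-- The exponent `α_p` of the prime `p` in `N_ρ`, where `ρ = x / log x`:
`α_p = 0` for `p > x`, and otherwise `α_p` is the (largest) `k ≥ 1` with
`(p^k - p^{k-1})/log p ≤ ρ < (p^{k+1} - p^k)/log p` (here `p^1 - p^0` is to be read as `p`,
i.e. as `ℓ(p^1) - ℓ(p^0)`). -/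
noncomputable def alphaExp (x : ℝ) (p : ℕ) : ℕ :=
  if (p : ℝ) ≤ x then sSup {k : ℕ | 1 ≤ k ∧ ellCost p k ≤ x / Real.log x} else 0

/-- Ramanujan's superior champion `N_ρ = ∏_{p ≤ x} p^{α_p}`, with `ρ = x / log x`. -/
noncomputable def Nrho (x : ℝ) : ℕ :=
  ∏ p ∈ (Finset.range (⌊x⌋₊ + 1)).filter Nat.Prime, p ^ alphaExp x p

/-- key lemma: for `k ≥ 2`, `ellCost p k ≤ x / log x` forces `p^k ≤ x`. -/
lemma keyB {p k : ℕ} (hp : p.Prime) (hk : 2 ≤ k) {x : ℝ} (hx : 4 < x)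
    (h : ellCost p k ≤ x / Real.log x) : (p : ℝ) ^ k ≤ x := by
  by_contra hcon
  push_neg at hcon
  set y : ℝ := (p : ℝ) ^ k with hy
  have hp2 : (2 : ℝ) ≤ (p : ℝ) := by exact_mod_cast hp.two_le
  have hp0 : (0 : ℝ) < p := by linarith
  have hlogp : 0 < Real.log p := Real.log_pos (by linarith)
  have hlogx : 0 < Real.log x := Real.log_pos (by linarith)
  have hy4 : 4 < y := lt_trans hx hcon
  have hy0 : 0 < y := by linarith
  have hlogy : Real.log y = k * Real.log p := by
    rw [hy, Real.log_pow]
  have hlogy0 : 0 < Real.log y := Real.log_pos (by linarith)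
  -- cost formula
  have hcost : ellCost p k = (y - y / p) / Real.log p := by
    unfold ellCost
    rw [ell_prime_pow hp (by omega), ell_prime_pow hp (by omega)]
    have : (p : ℝ) ^ (k - 1) = y / p := by
      rw [hy, eq_div_iff (ne_of_gt hp0), ← pow_succ]
      congr 1
      omega
    push_cast
    rw [this]
  -- x / log x ≤ y / log y, by antitonicity of log t / t on [e, ∞)
  have he : Real.exp 1 ≤ x := by
    have := Real.exp_one_lt_d9
    linarith
  have hanti := Real.log_div_self_antitoneOn
    (Set.mem_setOf_eq ▸ he) (Set.mem_setOf_eq ▸ (le_trans he hcon.le)) hcon.le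
  -- hanti : log y / y ≤ log x / x
  have hxy : x / Real.log x ≤ y / Real.log y := by
    rw [div_le_div_iff₀ hlogx hlogy0]
    rw [div_le_div_iff₀ hy0 (by linarith : (0:ℝ) < x)] at hanti
    linarith [hanti]
  -- now show y / log y < (y - y/p)/log p unless p = 2 ∧ k = 2
  by_cases hpk : p = 2 ∧ k = 2
  · -- then y = 4 < x, contradicting y > x > 4
    obtain ⟨rfl, rfl⟩ := hpk
    norm_num [hy] at hy4
  · -- k * (p - 1) > p
    have hkp : (p : ℝ) < k * ((p : ℝ) - 1) := by
      have hk3 : 3 ≤ k ∨ 3 ≤ p := by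
        rcases Nat.lt_or_ge k 3 with h1 | h1
        · right
          have hk2 : k = 2 := by omega
          have : p ≠ 2 := fun h => hpk ⟨h, hk2⟩
          have := hp.two_le
          omega
        · left; exact h1
      rcases hk3 with h1 | h1
      · have : (3 : ℝ) ≤ k := by exact_mod_cast h1
        nlinarith
      · have : (3 : ℝ) ≤ p := by exact_mod_cast h1
        have : (2 : ℝ) ≤ k := by exact_mod_cast hk
        nlinarith
    have hlt : y / Real.log y < (y - y / p) / Real.log p := by
      rw [hlogy, div_lt_div_iff₀ (by positivity) hlogp]
      have : y * (p : ℝ) < (y * p - y) * k := by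
        have h0 : y * ((p:ℝ)) < y * (k * ((p:ℝ) - 1)) :=
          (mul_lt_mul_iff_right₀ hy0).2 hkp
        nlinarith
      have hyp : y - y / p = (y * p - y) / p := by field_simp
      rw [hyp]
      rw [div_mul_eq_mul_div, lt_div_iff₀ hp0]
      nlinarith [hlogp]
    rw [hcost] at h
    linarith

lemma keyA {p : ℕ} (hp : p.Prime) {x : ℝ} (hx : 4 < x) (hpx : (p : ℝ) ≤ x) {k : ℕ}
    (hk1 : 1 ≤ k) (h : ellCost p k ≤ x / Real.log x) : (p : ℝ) ^ k ≤ x := by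
  rcases eq_or_lt_of_le hk1 with h1 | h2
  · rw [← h1, pow_one]; exact hpx
  · exact keyB hp h2 hx h

lemma prod_primepow_dvd {s : Finset ℕ} (hs : ∀ p ∈ s, Nat.Prime p) (f : ℕ → ℕ) {n : ℕ}
    (h : ∀ p ∈ s, p ^ f p ∣ n) : (∏ p ∈ s, p ^ f p) ∣ n := by
  classical
  induction s using Finset.induction with
  | empty => simp
  | @insert a s ha ih =>
    rw [Finset.prod_insert ha]
    have hcop : Nat.Coprime (a ^ f a) (∏ p ∈ s, p ^ f p) :=
      Nat.Coprime.prod_right fun q hq =>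
        (((Nat.coprime_primes (hs a (Finset.mem_insert_self a s))
          (hs q (Finset.mem_insert_of_mem hq))).2
          (fun hne => ha (hne ▸ hq))).pow _ _)
    exact hcop.mul_dvd_of_dvd_of_dvd (h a (Finset.mem_insert_self a s))
      (ih (fun p hp => hs p (Finset.mem_insert_of_mem hp))
        (fun p hp => h p (Finset.mem_insert_of_mem hp)))

/-- For `ρ > 2/log 2` and `x > 4` with `ρ = x/log x`, every prime `p ≤ x`
satisfies `p^{α_p} ≤ x`; consequently `N_ρ` divides `lcm(1, 2, …, ⌊x⌋)`. -/
theorem Nrho_primePow_le_and_dvd_lcm (ρ x : ℝ)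
    (hρ : 2 / Real.log 2 < ρ) (hx : 4 < x) (hρx : ρ = x / Real.log x) :
    (∀ p : ℕ, p.Prime → (p : ℝ) ≤ x → (p : ℝ) ^ alphaExp x p ≤ x) ∧
      Nrho x ∣ (Finset.Icc 1 ⌊x⌋₊).lcm id := by
  have hmain : ∀ p : ℕ, p.Prime → (p : ℝ) ≤ x → (p : ℝ) ^ alphaExp x p ≤ x := by
    intro p hp hpx
    rw [alphaExp, if_pos hpx]
    set S : Set ℕ := {k : ℕ | 1 ≤ k ∧ ellCost p k ≤ x / Real.log x} with hS
    have hbdd : BddAbove S := by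
      refine ⟨⌊x⌋₊, fun k hk => ?_⟩
      obtain ⟨hk1, hk2⟩ := hk
      have h1 : (p : ℝ) ^ k ≤ x := keyA hp hx hpx hk1 hk2
      have h2 : (k : ℝ) ≤ (p : ℝ) ^ k := by
        calc (k : ℝ) ≤ (2 : ℝ) ^ k := by exact_mod_cast (Nat.lt_two_pow_self (n := k)).le
        _ ≤ (p : ℝ) ^ k := by
            apply pow_le_pow_left₀ (by norm_num)
            exact_mod_cast hp.two_le
      exact Nat.le_floor (by linarith)
    rcases Set.eq_empty_or_nonempty S with he | hne
    · rw [he]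
      simp only [csSup_empty, Nat.bot_eq_zero, pow_zero]
      linarith
    · have hmem := Nat.sSup_mem hne hbdd
      exact keyA hp hx hpx hmem.1 hmem.2
  refine ⟨hmain, ?_⟩
  rw [Nrho]
  have hdvd : ∀ p ∈ (Finset.range (⌊x⌋₊ + 1)).filter Nat.Prime,
      p ^ alphaExp x p ∣ (Finset.Icc 1 ⌊x⌋₊).lcm id := by
    intro p hpmem
    rw [Finset.mem_filter, Finset.mem_range] at hpmem
    obtain ⟨hplt, hp⟩ := hpmem
    have hpx : (p : ℝ) ≤ x := by
      calc (p : ℝ) ≤ (⌊x⌋₊ : ℝ) := by exact_mod_cast Nat.lt_succ_iff.mp hplt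
      _ ≤ x := Nat.floor_le (by linarith)
    have hle : (p : ℝ) ^ alphaExp x p ≤ x := hmain p hp hpx
    have hmem : p ^ alphaExp x p ∈ Finset.Icc 1 ⌊x⌋₊ := by
      rw [Finset.mem_Icc]
      constructor
      · exact Nat.one_le_iff_ne_zero.mpr (pow_ne_zero _ hp.pos.ne')
      · exact Nat.le_floor (by push_cast; exact hle)
    exact Finset.dvd_lcm hmem
  exact prod_primepow_dvd (fun p hp => (Finset.mem_filter.mp hp).2) _ hdvd
end

section
/- Define f(d) = ∏_{p | d, p > 2} (p − 1)/(p − 2), the product being over the odd prime divisors p of d (empty product equal to 1). Then for every real x ≥ 1, ∑_{1 ≤ n ≤ x} f(n)² ≤ (8/3)·x. -/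
/-- `f(d) = ∏_{p ∣ d, p > 2} (p-1)/(p-2)`, the product over odd prime divisors of `d`. -/
noncomputable def fOdd (d : ℕ) : ℝ :=
  ∏ p ∈ d.primeFactors.filter (fun p => 2 < p), ((p : ℝ) - 1) / ((p : ℝ) - 2)

noncomputable def wA (p : ℕ) : ℝ := if 2 < p then (2*(p:ℝ)-3)/(((p:ℝ)-2)^2) else 0

lemma wA_nonneg (p : ℕ) : 0 ≤ wA p := by
  unfold wA
  split
  · have : (3:ℝ) ≤ (p:ℝ) := by exact_mod_cast ‹2 < p›
    have h1 : (0:ℝ) ≤ 2*(p:ℝ)-3 := by linarith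
    have h2 : (0:ℝ) < ((p:ℝ)-2)^2 := by nlinarith
    positivity
  · exact le_refl _

lemma fOdd_sq_eq_prod (n : ℕ) :
    fOdd n ^ 2 = ∏ p ∈ n.primeFactors, (1 + wA p) := by
  unfold fOdd
  rw [← Finset.prod_pow, Finset.prod_filter]
  refine Finset.prod_congr rfl fun p hp => ?_
  have hpp : p.Prime := Nat.prime_of_mem_primeFactors hp
  unfold wA
  split
  · have h3 : (3:ℝ) ≤ (p:ℝ) := by exact_mod_cast ‹2 < p›
    have h2 : (p:ℝ) - 2 ≠ 0 := by linarith
    field_simp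
    ring
  · simp

noncomputable def FA (d : ℕ) : ℝ := ∏ p ∈ d.primeFactors, wA p

lemma FA_nonneg (d : ℕ) : 0 ≤ FA d :=
  Finset.prod_nonneg fun p _ => wA_nonneg p

lemma fOdd_sq_eq_sum (n : ℕ) (hn : n ≠ 0) :
    fOdd n ^ 2 = ∑ d ∈ n.divisors.filter Squarefree, FA d := by
  rw [fOdd_sq_eq_prod, Nat.sum_divisors_filter_squarefree hn]
  have hnf : (UniqueFactorizationMonoid.normalizedFactors n).toFinset = n.primeFactors := by
    rw [Nat.factors_eq]
    rfl
  rw [hnf]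
  have : ∀ p ∈ n.primeFactors, (1 + wA p) = (wA p + 1) := fun p _ => add_comm _ _
  rw [Finset.prod_congr rfl this, Finset.prod_add]
  refine Finset.sum_congr rfl fun T hT => ?_
  rw [Finset.mem_powerset] at hT
  have hTp : ∀ p ∈ T, p.Prime := fun p hp =>
    Nat.prime_of_mem_primeFactors (hT hp)
  unfold FA
  have : (T.val.prod).primeFactors = T := by
    have := Nat.primeFactors_prod hTp
    simpa using this
  rw [this]
  simp

noncomputable def GA (d : ℕ) : ℝ := if Squarefree d then FA d else 0

lemma GA_nonneg (d : ℕ) : 0 ≤ GA d := by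
  unfold GA; split
  · exact FA_nonneg d
  · exact le_refl _

lemma swap_sum (N : ℕ) :
    ∑ n ∈ Finset.Icc 1 N, fOdd n ^ 2
      = ∑ d ∈ Finset.Icc 1 N, GA d * ((N / d : ℕ) : ℝ) := by
  have h1 : ∀ n ∈ Finset.Icc 1 N, fOdd n ^ 2
      = ∑ d ∈ Finset.Icc 1 N, (if d ∣ n then GA d else 0) := by
    intro n hn
    rw [Finset.mem_Icc] at hn
    have hn0 : n ≠ 0 := by omega
    rw [fOdd_sq_eq_sum n hn0]
    have hdiv : n.divisors.filter Squarefree = (Finset.Icc 1 N).filter (fun d => d ∣ n ∧ Squarefree d) := by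
      ext d
      simp only [Finset.mem_filter, Nat.mem_divisors, Finset.mem_Icc]
      constructor
      · rintro ⟨⟨hd, -⟩, hs⟩
        have hd1 : 1 ≤ d := Nat.pos_of_dvd_of_pos hd (by omega)
        have hdn : d ≤ n := Nat.le_of_dvd (by omega) hd
        exact ⟨⟨hd1, le_trans hdn hn.2⟩, hd, hs⟩
      · rintro ⟨-, hd, hs⟩
        exact ⟨⟨hd, hn0⟩, hs⟩
    rw [hdiv, Finset.sum_filter]
    refine Finset.sum_congr rfl fun d _ => ?_
    unfold GA
    by_cases h1 : d ∣ n <;> by_cases h2 : Squarefree d <;> simp [h1, h2]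
  rw [Finset.sum_congr rfl h1, Finset.sum_comm]
  refine Finset.sum_congr rfl fun d _ => ?_
  have : ∀ n ∈ Finset.Icc 1 N, (if d ∣ n then GA d else 0) = GA d * (if d ∣ n then (1:ℝ) else 0) := by
    intro n _; split <;> simp
  rw [Finset.sum_congr rfl this, ← Finset.mul_sum]
  congr 1
  rw [Finset.sum_boole]
  have hIcc : Finset.Icc 1 N = Finset.Ioc 0 N := by
    ext m; simp [Nat.lt_iff_add_one_le]
  rw [hIcc]
  rw [Nat.Ioc_filter_dvd_card_eq_div]

lemma sum_GA_div_le (N : ℕ) :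
    ∑ d ∈ Finset.Icc 1 N, GA d / d
      ≤ ∏ p ∈ (Finset.Icc 1 N).filter Nat.Prime, (1 + wA p / p) := by
  classical
  set P := (Finset.Icc 1 N).filter Nat.Prime with hP
  -- RHS as sum over powerset
  have hprod : ∏ p ∈ P, (1 + wA p / p) = ∑ T ∈ P.powerset, ∏ p ∈ T, (wA p / p) := by
    have : ∀ p ∈ P, (1 + wA p / p) = (wA p / p + 1) := fun p _ => add_comm _ _
    rw [Finset.prod_congr rfl this, Finset.prod_add]
    simp
  rw [hprod]
  -- LHS: restrict to squarefree d
  have hL : ∑ d ∈ Finset.Icc 1 N, GA d / d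
      = ∑ d ∈ (Finset.Icc 1 N).filter Squarefree, ∏ p ∈ d.primeFactors, (wA p / p) := by
    rw [Finset.sum_filter]
    refine Finset.sum_congr rfl fun d hd => ?_
    rw [Finset.mem_Icc] at hd
    unfold GA
    by_cases hs : Squarefree d
    · simp only [hs, if_true]
      have hd0 : d ≠ 0 := by omega
      have hdp : (d:ℝ) = ∏ p ∈ d.primeFactors, (p:ℝ) := by
        rw [← Nat.cast_prod]
        exact_mod_cast (congrArg (Nat.cast : ℕ → ℝ) (Nat.prod_primeFactors_of_squarefree hs)).symm
      unfold FA
      rw [hdp, ← Finset.prod_div_distrib]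
    · simp [hs]
  rw [hL]
  -- reindex squarefree d by their prime factors
  have himg : ∑ d ∈ (Finset.Icc 1 N).filter Squarefree, ∏ p ∈ d.primeFactors, (wA p / p)
      = ∑ T ∈ ((Finset.Icc 1 N).filter Squarefree).image Nat.primeFactors,
          ∏ p ∈ T, (wA p / p) := by
    rw [Finset.sum_image]
    intro a ha b hb hab
    rw [Finset.mem_coe, Finset.mem_filter, Finset.mem_Icc] at ha hb
    have := congrArg (fun s : Finset ℕ => ∏ p ∈ s, p) hab
    simpa [Nat.prod_primeFactors_of_squarefree ha.2,
      Nat.prod_primeFactors_of_squarefree hb.2] using this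
  rw [himg]
  refine Finset.sum_le_sum_of_subset_of_nonneg ?_ ?_
  · intro T hT
    rw [Finset.mem_image] at hT
    obtain ⟨d, hd, rfl⟩ := hT
    rw [Finset.mem_filter, Finset.mem_Icc] at hd
    rw [Finset.mem_powerset]
    intro p hp
    have hpp := Nat.prime_of_mem_primeFactors hp
    have hpd := Nat.dvd_of_mem_primeFactors hp
    rw [hP, Finset.mem_filter, Finset.mem_Icc]
    exact ⟨⟨hpp.one_lt.le, le_trans (Nat.le_of_dvd (by omega) hpd) hd.1.2⟩, hpp⟩
  · intro T _ _
    refine Finset.prod_nonneg fun p _ => ?_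
    have := wA_nonneg p
    positivity

lemma tele_eq (u : ℕ → ℝ) (a : ℕ) :
    ∀ b, a ≤ b + 1 → ∑ k ∈ Finset.Icc a b, (u k - u (k+1)) = u a - u (b+1) := by
  intro b
  induction b with
  | zero =>
    intro ha
    interval_cases a <;> simp
  | succ b ih =>
    intro ha
    rcases Nat.lt_or_ge a (b+2) with h | h
    · have ha' : a ≤ b + 1 := by omega
      rw [Finset.sum_Icc_succ_top ha', ih ha']
      ring
    · have : a = b + 2 := by omega
      subst this
      simp

lemma tail_sum_le (N : ℕ) :
    ∑ p ∈ ((Finset.Icc 1 N).filter Nat.Prime).filter (fun p => ¬ p ≤ 100),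
      wA p / p ≤ 1 / 98 := by
  classical
  set L := ((Finset.Icc 1 N).filter Nat.Prime).filter (fun p => ¬ p ≤ 100) with hL
  have hstep1 : ∑ p ∈ L, wA p / p ≤ ∑ p ∈ L, 2 / ((p:ℝ) - 2)^2 := by
    refine Finset.sum_le_sum fun p hp => ?_
    rw [hL, Finset.mem_filter, Finset.mem_filter, Finset.mem_Icc] at hp
    have hp100 : 100 < p := by omega
    have hpr : (101:ℝ) ≤ (p:ℝ) := by exact_mod_cast hp100
    have h2 : 2 < p := by omega
    unfold wA
    rw [if_pos h2]
    rw [div_div, div_le_div_iff₀ (by nlinarith) (by nlinarith)]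
    nlinarith [sq_nonneg ((p:ℝ)-2)]
  have hstep2 : ∑ p ∈ L, 2 / ((p:ℝ) - 2)^2
      ≤ ∑ m ∈ (Finset.Icc 101 N).filter (fun m => m % 2 = 1), 2 / ((m:ℝ) - 2)^2 := by
    refine Finset.sum_le_sum_of_subset_of_nonneg ?_ ?_
    · intro p hp
      rw [hL, Finset.mem_filter, Finset.mem_filter, Finset.mem_Icc] at hp
      obtain ⟨⟨⟨-, hpN⟩, hpr⟩, hp100⟩ := hp
      rw [Finset.mem_filter, Finset.mem_Icc]
      have hodd : p % 2 = 1 := Nat.odd_iff.mp (hpr.odd_of_ne_two (by omega))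
      exact ⟨⟨by omega, hpN⟩, hodd⟩
    · intro m hm _
      have h101 : 101 ≤ m := (Finset.mem_Icc.mp (Finset.mem_filter.mp hm).1).1
      have : (101:ℝ) ≤ (m:ℝ) := by exact_mod_cast h101
      positivity
  have hM : (Finset.Icc 101 N).filter (fun m => m % 2 = 1)
      = (Finset.Icc 50 ((N-1)/2)).image (fun k => 2*k+1) := by
    ext m
    simp only [Finset.mem_filter, Finset.mem_Icc, Finset.mem_image]
    constructor
    · rintro ⟨⟨h1, h2⟩, h3⟩
      exact ⟨(m-1)/2, by omega, by omega⟩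
    · rintro ⟨k, ⟨hk1, hk2⟩, rfl⟩
      refine ⟨⟨by omega, by omega⟩, by omega⟩
  have hstep3 : ∑ m ∈ (Finset.Icc 101 N).filter (fun m => m % 2 = 1), 2 / ((m:ℝ) - 2)^2
      = ∑ k ∈ Finset.Icc 50 ((N-1)/2), 2 / ((2*(k:ℝ)+1) - 2)^2 := by
    rw [hM, Finset.sum_image (by intro a _ b _ h; have h' : 2*a+1 = 2*b+1 := h; omega)]
    refine Finset.sum_congr rfl fun k _ => ?_
    push_cast
    ring_nf
  set u : ℕ → ℝ := fun k => 1 / (2*((k:ℝ) - 1)) with hu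
  have hstep4 : ∑ k ∈ Finset.Icc 50 ((N-1)/2), 2 / ((2*(k:ℝ)+1) - 2)^2
      ≤ ∑ k ∈ Finset.Icc 50 ((N-1)/2), (u k - u (k+1)) := by
    refine Finset.sum_le_sum fun k hk => ?_
    have hk50 : 50 ≤ k := (Finset.mem_Icc.mp hk).1
    have hkr : (50:ℝ) ≤ (k:ℝ) := by exact_mod_cast hk50
    rw [hu]
    push_cast
    rw [div_sub_div _ _ (by nlinarith) (by nlinarith), div_le_div_iff₀ (by nlinarith) (by nlinarith)]
    ring_nf
    nlinarith
  have hstep5 : ∑ k ∈ Finset.Icc 50 ((N-1)/2), (u k - u (k+1)) ≤ 1 / 98 := by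
    rcases Nat.lt_or_ge ((N-1)/2) 50 with h | h
    · rcases Nat.lt_or_ge ((N-1)/2 + 1) 50 with h' | h'
      · rw [Finset.Icc_eq_empty (by omega)]
        norm_num
      · have h50 : (N-1)/2 + 1 = 50 := by omega
        rw [Finset.Icc_eq_empty (by omega)]
        norm_num
    · rw [tele_eq u 50 _ (by omega)]
      have : 0 ≤ u ((N-1)/2 + 1) := by
        rw [hu]
        have h50 : (50:ℝ) ≤ ((N-1)/2 + 1 : ℕ) := by exact_mod_cast by omega
        have h2 : (0:ℝ) < 2*((((N-1)/2 + 1 : ℕ):ℝ) - 1) := by linarith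
        exact le_of_lt (div_pos one_pos h2)
      have hu50 : u 50 = 1 / 98 := by rw [hu]; norm_num
      linarith
  linarith

lemma v_nonneg (p : ℕ) : 0 ≤ wA p / p :=
  div_nonneg (wA_nonneg p) (Nat.cast_nonneg p)

set_option maxRecDepth 10000 in
lemma smallProdA : ∏ p ∈ ({2,3,5,7,11,13,17,19,23,29,31,37,41,43,47,53,59,61,67,71,73,79,83,89,97} : Finset ℕ), (1 + wA p / p) ≤ 26302/10000 := by
  rw [Finset.prod_insert (by decide), Finset.prod_insert (by decide), Finset.prod_insert (by decide), Finset.prod_insert (by decide), Finset.prod_insert (by decide), Finset.prod_insert (by decide), Finset.prod_insert (by decide), Finset.prod_insert (by decide), Finset.prod_insert (by decide), Finset.prod_insert (by decide), Finset.prod_insert (by decide), Finset.prod_insert (by decide), Finset.prod_insert (by decide), Finset.prod_insert (by decide), Finset.prod_insert (by decide), Finset.prod_insert (by decide), Finset.prod_insert (by decide), Finset.prod_insert (by decide), Finset.prod_insert (by decide), Finset.prod_insert (by decide), Finset.prod_insert (by decide), Finset.prod_insert (by decide), Finset.prod_insert (by decide), Finset.prod_insert (by decide), Finset.prod_singlet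on]
  unfold wA
  norm_num

set_option maxRecDepth 10000 in
lemma prime_le_100_mem : ∀ p ∈ Finset.range 101, p.Prime → p ∈ ({2,3,5,7,11,13,17,19,23,29,31,37,41,43,47,53,59,61,67,71,73,79,83,89,97} : Finset ℕ) := by
  decide

lemma prod_P_le (N : ℕ) :
    ∏ p ∈ (Finset.Icc 1 N).filter Nat.Prime, (1 + wA p / p) ≤ 8/3 := by
  classical
  set P := (Finset.Icc 1 N).filter Nat.Prime with hP
  rw [← Finset.prod_filter_mul_prod_filter_not P (fun p => p ≤ 100)]
  have h1le : ∀ p : ℕ, (1:ℝ) ≤ 1 + wA p / p := fun p => by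
    have := v_nonneg p; linarith
  have hsmall : ∏ p ∈ P.filter (fun p => p ≤ 100), (1 + wA p / p)
      ≤ ∏ p ∈ ({2,3,5,7,11,13,17,19,23,29,31,37,41,43,47,53,59,61,67,71,73,79,83,89,97} : Finset ℕ), (1 + wA p / p) := by
    have hsub : P.filter (fun p => p ≤ 100) ⊆ ({2,3,5,7,11,13,17,19,23,29,31,37,41,43,47,53,59,61,67,71,73,79,83,89,97} : Finset ℕ) := by
      intro p hp
      rw [Finset.mem_filter, hP, Finset.mem_filter] at hp
      exact prime_le_100_mem p (Finset.mem_range.mpr (by omega)) hp.1.2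
    rw [← Finset.prod_sdiff hsub]
    have h1 : (1:ℝ) ≤ ∏ p ∈ ({2,3,5,7,11,13,17,19,23,29,31,37,41,43,47,53,59,61,67,71,73,79,83,89,97} : Finset ℕ) \ (P.filter (fun p => p ≤ 100)), (1 + wA p / p) := by
      have := Finset.prod_le_prod (s := ({2,3,5,7,11,13,17,19,23,29,31,37,41,43,47,53,59,61,67,71,73,79,83,89,97} : Finset ℕ) \ (P.filter (fun p => p ≤ 100)))
        (f := fun _ => (1:ℝ)) (g := fun p => 1 + wA p / p)
        (fun _ _ => zero_le_one) (fun p _ => h1le p)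
      simpa using this
    have h0 : (0:ℝ) ≤ ∏ p ∈ P.filter (fun p => p ≤ 100), (1 + wA p / p) :=
      Finset.prod_nonneg fun p _ => by linarith [h1le p]
    exact le_mul_of_one_le_left h0 h1
  have hlarge : ∏ p ∈ P.filter (fun p => ¬ p ≤ 100), (1 + wA p / p) ≤ 98/97 := by
    have he : ∏ p ∈ P.filter (fun p => ¬ p ≤ 100), (1 + wA p / p)
        ≤ Real.exp (∑ p ∈ P.filter (fun p => ¬ p ≤ 100), wA p / p) := by
      rw [Real.exp_sum]
      refine Finset.prod_le_prod (fun p _ => by linarith [h1le p]) (fun p _ => ?_)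
      have := Real.add_one_le_exp (wA p / p)
      linarith
    have h2 : Real.exp (∑ p ∈ P.filter (fun p => ¬ p ≤ 100), wA p / p) ≤ Real.exp (1/98) :=
      Real.exp_le_exp.mpr (tail_sum_le N)
    have h3 : Real.exp (1/98 : ℝ) ≤ 98/97 := by
      have h := Real.add_one_le_exp (-(1/98:ℝ))
      rw [Real.exp_neg] at h
      have hE : 0 < Real.exp (1/98:ℝ) := Real.exp_pos _
      have h4 : Real.exp (1/98:ℝ) * (Real.exp (1/98:ℝ))⁻¹ = 1 := mul_inv_cancel₀ hE.ne'
      nlinarith [h, hE, h4]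
    linarith
  have h0s : (0:ℝ) ≤ ∏ p ∈ P.filter (fun p => p ≤ 100), (1 + wA p / p) :=
    Finset.prod_nonneg fun p _ => by linarith [h1le p]
  have h0l : (0:ℝ) ≤ ∏ p ∈ P.filter (fun p => ¬ p ≤ 100), (1 + wA p / p) :=
    Finset.prod_nonneg fun p _ => by linarith [h1le p]
  calc (∏ p ∈ P.filter (fun p => p ≤ 100), (1 + wA p / p))
        * ∏ p ∈ P.filter (fun p => ¬ p ≤ 100), (1 + wA p / p)
      ≤ (26302/10000) * (98/97) := by
        exact mul_le_mul (hsmall.trans smallProdA) hlarge h0l (by norm_num)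
    _ ≤ 8/3 := by norm_num


/-- For every real `x ≥ 1`, `∑_{1 ≤ n ≤ x} f(n)² ≤ (8/3) x`. -/
theorem sum_sq_fOdd_le (x : ℝ) (hx : 1 ≤ x) :
    ∑ n ∈ Finset.Icc 1 ⌊x⌋₊, (fOdd n) ^ 2 ≤ 8 / 3 * x := by
  set N := ⌊x⌋₊ with hN
  have hx0 : (0:ℝ) ≤ x := by linarith
  have hNx : (N:ℝ) ≤ x := Nat.floor_le hx0
  rw [swap_sum N]
  have hpt : ∀ d ∈ Finset.Icc 1 N, GA d * ((N / d : ℕ) : ℝ) ≤ x * (GA d / d) := by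
    intro d hd
    have hd1 : 1 ≤ d := (Finset.mem_Icc.mp hd).1
    have hd0 : (0:ℝ) < d := by exact_mod_cast hd1
    have hc : ((N/d : ℕ):ℝ) ≤ x / d := by
      calc ((N/d : ℕ):ℝ) ≤ (N:ℝ) / d := Nat.cast_div_le
        _ ≤ x / d := by gcongr
    calc GA d * ((N / d : ℕ) : ℝ) ≤ GA d * (x / d) :=
          mul_le_mul_of_nonneg_left hc (GA_nonneg d)
      _ = x * (GA d / d) := by ring
  calc ∑ d ∈ Finset.Icc 1 N, GA d * ((N / d : ℕ) : ℝ)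
      ≤ ∑ d ∈ Finset.Icc 1 N, x * (GA d / d) := Finset.sum_le_sum hpt
    _ = x * ∑ d ∈ Finset.Icc 1 N, GA d / d := by rw [Finset.mul_sum]
    _ ≤ x * (8/3) := by
        refine mul_le_mul_of_nonneg_left ?_ hx0
        exact le_trans (sum_GA_div_le N) (prod_P_le N)
    _ = 8 / 3 * x := mul_comm _ _
end

section
/- Assume there exist infinitely many primes p such that p + 2 is also prime. Then, with (n_k) enumerating the points of increase of Landau's function g, one has n_{k+1} − n_k ≤ 2 for infinitely many k. -/
set_option maxHeartbeats 1000000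

namespace LandauGap

open Finset

/-- cost of a prime power in Landau's additive function ℓ -/
def pcost (p a : ℕ) : ℕ := if a = 0 then 0 else p ^ a

@[simp] lemma pcost_zero (p : ℕ) : pcost p 0 = 0 := rfl

lemma pcost_of_ne {p a : ℕ} (h : a ≠ 0) : pcost p a = p ^ a := if_neg h

@[simp] lemma pcost_one (p : ℕ) : pcost p 1 = p := by simp [pcost]

/-- Landau's additive function: sum of the maximal prime powers dividing `L`. -/
noncomputable def ell (L : ℕ) : ℕ := ∑ p ∈ L.primeFactors, p ^ L.factorization p

lemma factorization_eq_zero_of_not_mem {L p : ℕ} (h : p ∉ L.primeFactors) :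
    L.factorization p = 0 := by
  rw [← Nat.support_factorization] at h
  exact Finsupp.notMem_support_iff.mp h

lemma ell_eq_sum_pcost (L : ℕ) : ell L = ∑ p ∈ L.primeFactors, pcost p (L.factorization p) := by
  refine Finset.sum_congr rfl fun p hp => ?_
  rw [← Nat.support_factorization] at hp
  rw [pcost_of_ne (Finsupp.mem_support_iff.mp hp)]

lemma ell_eq_sum_subset {L : ℕ} {S : Finset ℕ} (hS : L.primeFactors ⊆ S) :
    ell L = ∑ p ∈ S, pcost p (L.factorization p) := by
  rw [ell_eq_sum_pcost]
  refine Finset.sum_subset hS fun x _ hx => ?_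
  rw [factorization_eq_zero_of_not_mem hx, pcost_zero]

@[simp] lemma ell_one : ell 1 = 0 := by simp [ell]

lemma sum_le_prod (s : Finset ℕ) (f : ℕ → ℕ) (hf : ∀ i ∈ s, 2 ≤ f i) :
    ∑ i ∈ s, f i ≤ ∏ i ∈ s, f i := by
  classical
  induction s using Finset.induction_on with
  | empty => simp
  | @insert a s ha ih =>
    rw [Finset.sum_insert ha, Finset.prod_insert ha]
    have h2 : 2 ≤ f a := hf a (Finset.mem_insert_self a s)
    have ih' := ih fun i hi => hf i (Finset.mem_insert_of_mem hi)
    rcases s.eq_empty_or_nonempty with rfl | hne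
    · simp
    · obtain ⟨j, hj⟩ := hne
      have hP : 2 ≤ ∏ i ∈ s, f i := by
        calc 2 ≤ f j := hf j (Finset.mem_insert_of_mem hj)
        _ ≤ ∏ i ∈ s, f i :=
          Finset.single_le_prod' (fun i hi => le_trans (by norm_num)
            (hf i (Finset.mem_insert_of_mem hi))) hj
      have hS : ∑ i ∈ s, f i ≤ ∏ i ∈ s, f i := ih'
      nlinarith

lemma ell_le_self {L : ℕ} (hL : L ≠ 0) : ell L ≤ L := by
  have hprod : ∏ p ∈ L.primeFactors, p ^ L.factorization p = L := by
    have h := Nat.factorization_prod_pow_eq_self hL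
    rw [Finsupp.prod] at h
    rwa [Nat.support_factorization] at h
  calc ell L ≤ ∏ p ∈ L.primeFactors, p ^ L.factorization p := by
        apply sum_le_prod
        intro p hp
        have hpp : p.Prime := Nat.prime_of_mem_primeFactors hp
        have hv : L.factorization p ≠ 0 := by
          rw [← Nat.support_factorization] at hp
          exact Finsupp.mem_support_iff.mp hp
        calc 2 ≤ p := hpp.two_le
        _ = p ^ 1 := (pow_one p).symm
        _ ≤ p ^ L.factorization p := Nat.pow_le_pow_right hpp.pos (by omega)
  _ = L := hprod

lemma pcost_max_le (p a b : ℕ) : pcost p (max a b) ≤ pcost p a + pcost p b := by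
  rcases le_total a b with h | h
  · rw [max_eq_right h]; exact Nat.le_add_left _ _
  · rw [max_eq_left h]; exact Nat.le_add_right _ _

lemma ell_lcm_le {a b : ℕ} (ha : a ≠ 0) (hb : b ≠ 0) :
    ell (Nat.lcm a b) ≤ ell a + ell b := by
  have hl : Nat.lcm a b ≠ 0 := Nat.lcm_ne_zero ha hb
  have hsa : a.primeFactors ⊆ (Nat.lcm a b).primeFactors :=
    Nat.primeFactors_mono (Nat.dvd_lcm_left a b) hl
  have hsb : b.primeFactors ⊆ (Nat.lcm a b).primeFactors :=
    Nat.primeFactors_mono (Nat.dvd_lcm_right a b) hl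
  rw [ell_eq_sum_pcost, ell_eq_sum_subset hsa, ell_eq_sum_subset hsb, ← Finset.sum_add_distrib]
  apply Finset.sum_le_sum
  intro p _
  have hmax : (Nat.lcm a b).factorization p = max (a.factorization p) (b.factorization p) := by
    rw [Nat.factorization_lcm ha hb]
    rfl
  rw [hmax]
  exact pcost_max_le p _ _

lemma ell_multiset_lcm (s : Multiset ℕ) (hs : ∀ x ∈ s, x ≠ 0) :
    s.lcm ≠ 0 ∧ ell s.lcm ≤ s.sum := by
  induction s using Multiset.induction_on with
  | empty => simp
  | cons a s ih =>
    have ha : a ≠ 0 := hs a (Multiset.mem_cons_self a s)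
    have ih' := ih fun x hx => hs x (Multiset.mem_cons_of_mem hx)
    rw [Multiset.lcm_cons, lcm_eq_nat_lcm, Multiset.sum_cons]
    constructor
    · exact Nat.lcm_ne_zero ha ih'.1
    · calc ell (Nat.lcm a s.lcm) ≤ ell a + ell s.lcm := ell_lcm_le ha ih'.1
      _ ≤ a + s.sum := Nat.add_le_add (ell_le_self ha) ih'.2

lemma ell_orderOf_le {n : ℕ} (σ : Equiv.Perm (Fin n)) : ell (orderOf σ) ≤ n := by
  have h2 : ∀ x ∈ σ.cycleType, x ≠ 0 := fun x hx => by
    have := Equiv.Perm.two_le_of_mem_cycleType hx; omega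
  have h := (ell_multiset_lcm σ.cycleType h2).2
  rw [Equiv.Perm.lcm_cycleType] at h
  calc ell (orderOf σ) ≤ σ.cycleType.sum := h
  _ = σ.support.card := Equiv.Perm.sum_cycleType σ
  _ ≤ Fintype.card (Fin n) := Finset.card_le_univ _
  _ = n := Fintype.card_fin n

end LandauGap

/-- `landauInc n` means `n ≥ 1` is a point of increase of Landau's function. -/
noncomputable def landauInc (n : ℕ) : Prop := 1 ≤ n ∧ landau (n - 1) < landau n

/-- `landauNth k` is the `(k+1)`-st point of increase of Landau's function,
so that `landauNth 0 = n₁ = 1`, `landauNth 1 = n₂ = 2`, etc. -/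
noncomputable def landauNth (k : ℕ) : ℕ := Nat.nth landauInc k

namespace LandauGap


lemma one_le_landau (n : ℕ) : 1 ≤ landau n := by
  have h := Finset.le_sup (f := fun σ : Equiv.Perm (Fin n) => orderOf σ)
    (Finset.mem_univ 1)
  simpa [landau] using h

lemma ell_landau_le (n : ℕ) : ell (landau n) ≤ n := by
  obtain ⟨σ, -, hσ⟩ := Finset.exists_mem_eq_sup Finset.univ Finset.univ_nonempty
    (fun σ : Equiv.Perm (Fin n) => orderOf σ)
  rw [landau, hσ]
  exact ell_orderOf_le σ

lemma multiset_lcm_eq {L : ℕ} (hL : L ≠ 0) :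
    (L.primeFactors.val.map fun p => p ^ L.factorization p).lcm = L := by
  set m := L.primeFactors.val.map fun p => p ^ L.factorization p with hm
  have hdvd : m.lcm ∣ L := by
    apply Multiset.lcm_dvd.mpr
    intro x hx
    obtain ⟨p, -, rfl⟩ := Multiset.mem_map.mp hx
    exact Nat.ordProj_dvd L p
  have hlcm0 : m.lcm ≠ 0 := fun h => hL (by simpa [h] using hdvd)
  refine Nat.dvd_antisymm hdvd ?_
  rw [← Nat.factorization_le_iff_dvd hL hlcm0]
  intro p
  by_cases hp : p ∈ L.primeFactors
  · have hmem : p ^ L.factorization p ∈ m := Multiset.mem_map.mpr ⟨p, hp, rfl⟩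
    have hd : p ^ L.factorization p ∣ m.lcm := Multiset.dvd_lcm hmem
    have hpp : p.Prime := Nat.prime_of_mem_primeFactors hp
    exact (Nat.Prime.pow_dvd_iff_le_factorization hpp hlcm0).mp hd
  · simp [factorization_eq_zero_of_not_mem hp]

lemma le_landau {n L : ℕ} (hL : 1 ≤ L) (h : ell L ≤ n) : L ≤ landau n := by
  have hL0 : L ≠ 0 := by omega
  set m : Multiset ℕ := L.primeFactors.val.map (fun p => p ^ L.factorization p) with hm
  have hsum : m.sum = ell L := rfl
  have hmem2 : ∀ x ∈ m, 2 ≤ x := by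
    intro x hx
    obtain ⟨p, hp, rfl⟩ := Multiset.mem_map.mp hx
    have hpp : p.Prime := Nat.prime_of_mem_primeFactors hp
    have hv : L.factorization p ≠ 0 := by
      rw [← Nat.support_factorization] at hp
      exact Finsupp.mem_support_iff.mp hp
    calc 2 ≤ p := hpp.two_le
    _ ≤ p ^ L.factorization p := Nat.le_self_pow hv p
  have hex : ∃ σ : Equiv.Perm (Fin n), σ.cycleType = m := by
    rw [Equiv.Perm.exists_with_cycleType_iff (Fin n)]
    refine ⟨?_, hmem2⟩
    rw [hsum, Fintype.card_fin]
    exact h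
  obtain ⟨σ, hσ⟩ := hex
  have horder : orderOf σ = L := by
    rw [← Equiv.Perm.lcm_cycleType, hσ, multiset_lcm_eq hL0]
  calc L = orderOf σ := horder.symm
  _ ≤ landau n := Finset.le_sup (Finset.mem_univ σ)

lemma landau_mono : Monotone landau := by
  intro m n h
  obtain ⟨σ, -, hσ⟩ := Finset.exists_mem_eq_sup Finset.univ Finset.univ_nonempty
    (fun σ : Equiv.Perm (Fin m) => orderOf σ)
  rw [landau, hσ]
  exact le_landau (orderOf_pos σ) (le_trans (ell_orderOf_le σ) h)


noncomputable def tq (q : ℕ) : ℝ := q / Real.log q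

def Pq (q p a : ℕ) : Prop := (pcost p a : ℝ) ≤ (pcost p (a - 1) : ℝ) + tq q * Real.log p

noncomputable def Bq (q : ℕ) : ℕ := ⌈tq q⌉₊ + 1

noncomputable def expo (q p : ℕ) : ℕ := @Nat.findGreatest (Pq q p) (Classical.decPred _) (Bq q)

variable {q p : ℕ}

lemma logq_pos (h5 : 5 ≤ q) : 0 < Real.log q := by
  apply Real.log_pos
  have : (5 : ℝ) ≤ (q : ℝ) := by exact_mod_cast h5
  linarith

lemma one_le_logq (h5 : 5 ≤ q) : 1 ≤ Real.log q := by
  have hq0 : (0:ℝ) < (q:ℝ) := by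
    have : (5 : ℝ) ≤ (q : ℝ) := by exact_mod_cast h5
    linarith
  rw [Real.le_log_iff_exp_le hq0]
  calc Real.exp 1 ≤ 3 := le_of_lt (lt_of_lt_of_le Real.exp_one_lt_d9 (by norm_num))
  _ ≤ (q : ℝ) := by
    have : (5 : ℝ) ≤ (q : ℝ) := by exact_mod_cast h5
    linarith

lemma tq_pos (h5 : 5 ≤ q) : 0 < tq q := by
  apply div_pos _ (logq_pos h5)
  have : (5 : ℝ) ≤ (q : ℝ) := by exact_mod_cast h5
  linarith

lemma tq_mul_logq (h5 : 5 ≤ q) : tq q * Real.log q = q :=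
  div_mul_cancel₀ _ (ne_of_gt (logq_pos h5))

lemma tq_log_lt (h5 : 5 ≤ q) (hqp : q < p) : tq q * Real.log p < p := by
  have hq0 : (0:ℝ) < (q:ℝ) := by
    have : (5 : ℝ) ≤ (q : ℝ) := by exact_mod_cast h5
    linarith
  have hp0 : (0:ℝ) < (p:ℝ) := by
    have : 0 < p := by omega
    exact_mod_cast this
  have hqp' : (q:ℝ) < (p:ℝ) := by exact_mod_cast hqp
  have hlq := one_le_logq h5
  have hx : Real.log ((p:ℝ) / (q:ℝ)) < (p:ℝ)/(q:ℝ) - 1 := by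
    apply Real.log_lt_sub_one_of_pos (by positivity)
    intro h
    rw [div_eq_one_iff_eq (ne_of_gt hq0)] at h
    linarith
  rw [Real.log_div (ne_of_gt hp0) (ne_of_gt hq0)] at hx
  have key : (q:ℝ) * Real.log p < (p:ℝ) * Real.log q := by
    have h1 : (q:ℝ) * (Real.log p - Real.log q) < (q:ℝ) * ((p:ℝ)/(q:ℝ) - 1) :=
      (mul_lt_mul_iff_right₀ hq0).mpr hx
    have h2 : (q:ℝ) * ((p:ℝ)/(q:ℝ) - 1) = (p:ℝ) - (q:ℝ) := by
      field_simp
    have h3 : ((p:ℝ) - (q:ℝ)) * 1 ≤ ((p:ℝ) - (q:ℝ)) * Real.log q :=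
      mul_le_mul_of_nonneg_left hlq (by linarith)
    nlinarith
  rw [tq, div_mul_eq_mul_div, div_lt_iff₀ (logq_pos h5)]
  linarith

lemma Pq_zero (h5 : 5 ≤ q) : Pq q p 0 := by
  have := mul_nonneg (le_of_lt (tq_pos h5)) (Real.log_natCast_nonneg p)
  simp only [Pq, Nat.zero_sub, pcost_zero, Nat.cast_zero]
  linarith

lemma expo_spec (h5 : 5 ≤ q) : Pq q p (expo q p) :=
  @Nat.findGreatest_spec 0 (Pq q p) (Classical.decPred _) (Bq q) (Nat.zero_le _) (Pq_zero h5)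

lemma expo_not {a : ℕ} (ha : expo q p < a) (hb : a ≤ Bq q) : ¬ Pq q p a :=
  @Nat.findGreatest_is_greatest a (Pq q p) (Classical.decPred _) (Bq q) ha hb

lemma marg_ge (hp : p.Prime) {a : ℕ} (ha : expo q p < a) :
    (pcost p (a - 1) : ℝ) + tq q * Real.log p ≤ (pcost p a : ℝ) := by
  by_cases hb : a ≤ Bq q
  · have h := expo_not ha hb
    rw [Pq] at h
    push_neg at h
    linarith
  · push_neg at hb
    have hB1 : 1 ≤ Bq q := by rw [Bq]; omega
    have ha2 : 2 ≤ a := by omega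
    have ha1 : a - 1 ≠ 0 := by omega
    rw [pcost_of_ne ha1, pcost_of_ne (by omega : a ≠ 0)]
    have hp2 : (2:ℝ) ≤ (p:ℝ) := by exact_mod_cast hp.two_le
    have ht1 : tq q ≤ (Bq q : ℝ) := by
      rw [Bq]
      push_cast
      calc tq q ≤ (⌈tq q⌉₊ : ℝ) := Nat.le_ceil _
      _ ≤ (⌈tq q⌉₊ : ℝ) + 1 := by linarith
    have ht2 : Bq q ≤ a := by omega
    have ht3 : a ≤ 2 ^ (a - 1) := by
      have := Nat.lt_two_pow_self (n := a - 1)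
      omega
    have ht4 : (2:ℕ) ^ (a-1) ≤ p ^ (a-1) := Nat.pow_le_pow_left hp.two_le _
    have ht : tq q ≤ (p:ℝ) ^ (a - 1) := by
      calc tq q ≤ (Bq q : ℝ) := ht1
      _ ≤ ((p ^ (a-1) : ℕ) : ℝ) := by exact_mod_cast le_trans ht2 (le_trans ht3 ht4)
      _ = (p:ℝ) ^ (a-1) := by push_cast; ring
    have hlog : Real.log p ≤ (p:ℝ) - 1 := Real.log_le_sub_one_of_pos (by linarith)
    have hmul : tq q * Real.log p ≤ (p:ℝ)^(a-1) * ((p:ℝ) - 1) :=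
      mul_le_mul ht hlog (Real.log_natCast_nonneg p) (by positivity)
    have hpow : (p:ℝ)^(a-1) * (p:ℝ) = (p:ℝ)^a := by
      rw [← pow_succ]
      congr 1
      omega
    push_cast
    nlinarith

lemma pcost_convex {a b : ℕ} (hp2 : 2 ≤ p) (ha : 1 ≤ a) (hab : a ≤ b) :
    pcost p a + pcost p (b - 1) ≤ pcost p (a - 1) + pcost p b := by
  induction b, hab using Nat.le_induction with
  | base => omega
  | succ b hb IH =>
    have step : pcost p b + pcost p b ≤ pcost p (b - 1) + pcost p (b + 1) := by
      have hb1 : 1 ≤ b := le_trans ha hb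
      rcases Nat.eq_or_lt_of_le hb1 with h1 | h2
      · rw [← h1]
        simp only [pcost]
        norm_num
        nlinarith
      · obtain ⟨c, rfl⟩ : ∃ c, b = c + 1 := ⟨b - 1, by omega⟩
        have hc : 1 ≤ c := by omega
        rw [pcost_of_ne (by omega), pcost_of_ne (by omega), pcost_of_ne (by omega)]
        simp only [Nat.add_sub_cancel]
        have h2p : 2 * p ≤ 1 + p^2 := by nlinarith
        have hmul := Nat.mul_le_mul_left (p^c) h2p
        have e1 : p ^ (c+1) = p^c * p := pow_succ p c
        have e2 : p ^ (c+1+1) = p^c * p^2 := by ring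
        nlinarith
    have hbs : b + 1 - 1 = b := by omega
    rw [hbs]
    omega

lemma marg_le (h5 : 5 ≤ q) (hp : p.Prime) {a : ℕ} (ha : 1 ≤ a) (hae : a ≤ expo q p) :
    (pcost p a : ℝ) ≤ (pcost p (a - 1) : ℝ) + tq q * Real.log p := by
  have hc := pcost_convex (p := p) hp.two_le ha hae
  have hPe := expo_spec (p := p) h5
  rw [Pq] at hPe
  have hc' : (pcost p a : ℝ) + (pcost p (expo q p - 1) : ℝ) ≤
      (pcost p (a-1) : ℝ) + (pcost p (expo q p) : ℝ) := by exact_mod_cast hc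
  linarith

noncomputable def phi (q p a : ℕ) : ℝ := tq q * a * Real.log p - pcost p a

@[simp] lemma phi_zero : phi q p 0 = 0 := by simp [phi]

lemma phi_step_le (h5 : 5 ≤ q) (hp : p.Prime) {a : ℕ} (ha : a < expo q p) :
    phi q p a ≤ phi q p (a + 1) := by
  have h := marg_le h5 hp (a := a + 1) (by omega) (by omega)
  simp only [Nat.add_sub_cancel] at h
  rw [phi, phi]
  push_cast
  nlinarith

lemma phi_step_ge (hp : p.Prime) {a : ℕ} (ha : expo q p ≤ a) :
    phi q p (a + 1) ≤ phi q p a := by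
  have h := marg_ge (q := q) hp (a := a + 1) (by omega)
  simp only [Nat.add_sub_cancel] at h
  rw [phi, phi]
  push_cast
  nlinarith

lemma phi_le (h5 : 5 ≤ q) (hp : p.Prime) (b : ℕ) : phi q p b ≤ phi q p (expo q p) := by
  rcases le_or_gt b (expo q p) with h | h
  · have key : ∀ d a, a + d = expo q p → phi q p a ≤ phi q p (expo q p) := by
      intro d
      induction d with
      | zero =>
        intro a ha
        rw [show a = expo q p by omega]
      | succ d ih =>
        intro a ha
        calc phi q p a ≤ phi q p (a + 1) := phi_step_le h5 hp (by omega)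
        _ ≤ phi q p (expo q p) := ih (a + 1) (by omega)
    exact key (expo q p - b) b (by omega)
  · have key : ∀ d, phi q p (expo q p + d) ≤ phi q p (expo q p) := by
      intro d
      induction d with
      | zero => exact le_refl _
      | succ d ih =>
        calc phi q p (expo q p + (d+1)) = phi q p ((expo q p + d) + 1) := by rw [← add_assoc]
        _ ≤ phi q p (expo q p + d) := phi_step_ge hp (by omega)
        _ ≤ phi q p (expo q p) := ih
    have hb : b = expo q p + (b - expo q p) := by omega
    rw [hb]
    exact key _


section part3

variable {q p : ℕ}

lemma factorization_prod_primes (s : Finset ℕ) (hs : ∀ p ∈ s, p.Prime) (f : ℕ → ℕ) (r : ℕ) :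
    (∏ p ∈ s, p ^ f p).factorization r = if r ∈ s then f r else 0 := by
  classical
  induction s using Finset.induction_on with
  | empty => simp
  | @insert a s ha ih =>
    have hane : a ^ f a ≠ 0 := pow_ne_zero _ (hs a (Finset.mem_insert_self a s)).pos.ne'
    have hsne : ∏ p ∈ s, p ^ f p ≠ 0 :=
      Finset.prod_ne_zero_iff.mpr fun p hp => pow_ne_zero _ (hs p (Finset.mem_insert_of_mem hp)).pos.ne'
    rw [Finset.prod_insert ha, Nat.factorization_mul hane hsne]
    have hap : Nat.Prime a := hs a (Finset.mem_insert_self a s)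
    have ih' := ih fun p hp => hs p (Finset.mem_insert_of_mem hp)
    rw [Finsupp.add_apply, hap.factorization_pow, ih']
    rw [Finsupp.single_apply]
    by_cases h1 : r = a
    · subst h1
      simp [ha]
    · rw [if_neg (fun h => h1 h.symm)]
      by_cases h2 : r ∈ s <;> simp [h1, h2, Finset.mem_insert]

lemma ell_prod_primes (s : Finset ℕ) (hs : ∀ p ∈ s, p.Prime) (f : ℕ → ℕ) :
    ell (∏ p ∈ s, p ^ f p) = ∑ p ∈ s, pcost p (f p) := by
  classical
  have hsub : (∏ p ∈ s, p ^ f p).primeFactors ⊆ s := by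
    intro r hr
    have hv : (∏ p ∈ s, p ^ f p).factorization r ≠ 0 := by
      rw [← Nat.support_factorization] at hr
      exact Finsupp.mem_support_iff.mp hr
    rw [factorization_prod_primes s hs f r] at hv
    by_contra hrs
    simp [hrs] at hv
  rw [ell_eq_sum_subset hsub]
  refine Finset.sum_congr rfl fun p hp => ?_
  rw [factorization_prod_primes s hs f p, if_pos hp]

lemma log_eq_sum {K : ℕ} (hK : K ≠ 0) {S : Finset ℕ} (hS : K.primeFactors ⊆ S)
    (hSp : ∀ p ∈ S, p ≠ 0) :
    Real.log K = ∑ p ∈ S, (K.factorization p : ℝ) * Real.log p := by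
  have hprod : ∏ p ∈ S, p ^ K.factorization p = K := by
    rw [← Finset.prod_subset hS (fun x _ hx => by
      rw [factorization_eq_zero_of_not_mem hx, pow_zero])]
    have h := Nat.factorization_prod_pow_eq_self hK
    rw [Finsupp.prod] at h
    rwa [Nat.support_factorization] at h
  conv_lhs => rw [← hprod]
  push_cast
  rw [Real.log_prod (fun p hp => by
    have : p ≠ 0 := hSp p hp
    positivity)]
  refine Finset.sum_congr rfl fun p hp => ?_
  rw [Real.log_pow]

/-- the champion number attached to `q` -/
noncomputable def Nq (q : ℕ) : ℕ := ∏ p ∈ Nat.primesBelow (q+1), p ^ expo q p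

lemma Nq_ne_zero : Nq q ≠ 0 :=
  Finset.prod_ne_zero_iff.mpr fun p hp =>
    pow_ne_zero _ (Nat.prime_of_mem_primesBelow hp).pos.ne'

lemma vNq (r : ℕ) :
    (Nq q).factorization r = if r ∈ Nat.primesBelow (q+1) then expo q r else 0 :=
  factorization_prod_primes _ (fun p hp => Nat.prime_of_mem_primesBelow hp) _ r

lemma ell_Nq : ell (Nq q) = ∑ p ∈ Nat.primesBelow (q+1), pcost p (expo q p) :=
  ell_prod_primes _ (fun p hp => Nat.prime_of_mem_primesBelow hp) _

lemma expo_gt_eq_zero (h5 : 5 ≤ q) (hp : p.Prime) (hqp : q < p) : expo q p = 0 := by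
  rw [expo]
  apply (@Nat.findGreatest_eq_zero_iff (Bq q) (Pq q p) (Classical.decPred _)).mpr
  intro a ha0 _ hPa
  rw [Pq] at hPa
  have key : tq q * Real.log p < p := tq_log_lt h5 hqp
  have hp2 : 2 ≤ p := hp.two_le
  rcases Nat.eq_or_lt_of_le ha0 with h1 | h2
  · -- a = 1
    rw [← h1] at hPa
    simp at hPa
    linarith
  · -- a ≥ 2
    have ha1 : a - 1 ≠ 0 := by omega
    rw [pcost_of_ne ha1, pcost_of_ne (by omega : a ≠ 0)] at hPa
    have hnat : p ^ (a-1) + p ≤ p ^ a := by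
      have h3 : p ^ (a-1) * 2 ≤ p ^ (a-1) * p := Nat.mul_le_mul_left _ hp2
      have h4 : p ^ (a-1) * p = p ^ a := by
        rw [← pow_succ]
        congr 1
        omega
      have h5' : p ≤ p ^ (a-1) := by
        calc p = p ^ 1 := (pow_one p).symm
        _ ≤ p ^ (a-1) := Nat.pow_le_pow_right hp.pos (by omega)
      omega
    have hnat' : ((p:ℝ) ^ (a-1) : ℝ) + (p:ℝ) ≤ (p:ℝ) ^ a := by exact_mod_cast hnat
    push_cast at hPa
    linarith

lemma expo_q_eq_one (h5 : 5 ≤ q) (hq : q.Prime) : expo q q = 1 := by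
  rw [expo]
  apply (@Nat.findGreatest_eq_iff 1 (Bq q) (Pq q q) (Classical.decPred _)).mpr
  have hB1 : 1 ≤ Bq q := by rw [Bq]; omega
  refine ⟨hB1, fun _ => ?_, fun a ha1 haB hPa => ?_⟩
  · -- Pq q q 1
    rw [Pq]
    simp only [pcost_one, Nat.sub_self, pcost_zero, Nat.cast_zero]
    rw [tq_mul_logq h5]
    linarith
  · -- ¬ Pq q q a for a ≥ 2
    rw [Pq] at hPa
    have ha1' : a - 1 ≠ 0 := by omega
    rw [pcost_of_ne ha1', pcost_of_ne (by omega : a ≠ 0), tq_mul_logq h5] at hPa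
    have hnat : q ^ (a-1) + q < q ^ a := by
      have h3 : q ^ (a-1) * 3 ≤ q ^ (a-1) * q := Nat.mul_le_mul_left _ (by omega)
      have h4 : q ^ (a-1) * q = q ^ a := by
        rw [← pow_succ]
        congr 1
        omega
      have h5' : q ≤ q ^ (a-1) := by
        calc q = q ^ 1 := (pow_one q).symm
        _ ≤ q ^ (a-1) := Nat.pow_le_pow_right (by omega) (by omega)
      have h6 : 1 ≤ q ^ (a-1) := by omega
      omega
    have hnat' : ((q:ℝ) ^ (a-1) : ℝ) + (q:ℝ) < (q:ℝ) ^ a := by exact_mod_cast hnat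
    push_cast at hPa
    linarith

/-- the master optimality inequality -/
lemma master (h5 : 5 ≤ q) {M : ℕ} (hM : M ≠ 0) :
    tq q * Real.log M - (ell M : ℝ) ≤ tq q * Real.log (Nq q) - (ell (Nq q) : ℝ) := by
  classical
  set S := M.primeFactors ∪ Nat.primesBelow (q+1) with hS
  have hSprime : ∀ p ∈ S, p.Prime := by
    intro p hp
    rcases Finset.mem_union.mp hp with h | h
    · exact Nat.prime_of_mem_primeFactors h
    · exact Nat.prime_of_mem_primesBelow h
  have hSne : ∀ p ∈ S, p ≠ 0 := fun p hp => (hSprime p hp).pos.ne'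
  have expand : ∀ K : ℕ, K ≠ 0 → K.primeFactors ⊆ S →
      tq q * Real.log K - (ell K : ℝ) = ∑ p ∈ S, phi q p (K.factorization p) := by
    intro K hK hKS
    rw [log_eq_sum hK hKS hSne, ell_eq_sum_subset hKS, Finset.mul_sum]
    push_cast
    rw [← Finset.sum_sub_distrib]
    refine Finset.sum_congr rfl fun x _ => ?_
    rw [phi]
    ring
  have hNsub : (Nq q).primeFactors ⊆ S := by
    intro r hr
    apply Finset.mem_union_right
    have hv : (Nq q).factorization r ≠ 0 := by
      rw [← Nat.support_factorization] at hr
      exact Finsupp.mem_support_iff.mp hr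
    rw [vNq] at hv
    by_contra hrs
    simp [hrs] at hv
  rw [expand M hM Finset.subset_union_left, expand (Nq q) Nq_ne_zero hNsub]
  apply Finset.sum_le_sum
  intro r hr
  have hrp : r.Prime := hSprime r hr
  have hv : (Nq q).factorization r = expo q r := by
    rw [vNq]
    by_cases h : r ∈ Nat.primesBelow (q+1)
    · rw [if_pos h]
    · rw [if_neg h, expo_gt_eq_zero h5 hrp ?_]
      by_contra hle
      push_neg at hle
      exact h (Nat.mem_primesBelow.mpr ⟨by omega, hrp⟩)
  rw [hv]
  exact phi_le h5 hrp _

end part3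


variable {q : ℕ}

lemma exists_inc (hq : q.Prime) (hq2 : (q+2).Prime) (h5 : 5 ≤ q) :
    ∃ n, q ≤ n ∧ landauInc n ∧ landau n < landau (n + 2) := by
  classical
  set n := ell (Nq q) with hn
  have hqmem : q ∈ Nat.primesBelow (q+1) := Nat.mem_primesBelow.mpr ⟨by omega, hq⟩
  have hellq : pcost q (expo q q) = q := by rw [expo_q_eq_one h5 hq, pcost_one]
  have hqn : q ≤ n := by
    have h : pcost q (expo q q) ≤ ∑ p ∈ Nat.primesBelow (q+1), pcost p (expo q p) :=
      Finset.single_le_sum (f := fun p => pcost p (expo q p))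
        (fun i _ => Nat.zero_le _) hqmem
    rw [hn, ell_Nq]
    omega
  have hNq1 : 1 ≤ Nq q := Nat.one_le_iff_ne_zero.mpr Nq_ne_zero
  have hNq0R : (0:ℝ) < (Nq q : ℝ) := by exact_mod_cast hNq1
  have hupper : ∀ M : ℕ, 1 ≤ M → ell M ≤ n → M ≤ Nq q := by
    intro M hM1 hMle
    have hm := master h5 (show M ≠ 0 by omega)
    have hM0 : (0:ℝ) < (M : ℝ) := by exact_mod_cast hM1
    have hcast : (ell M : ℝ) ≤ (ell (Nq q) : ℝ) := by exact_mod_cast hMle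
    have h2 : tq q * Real.log M ≤ tq q * Real.log (Nq q) := by linarith
    have h3 : Real.log M ≤ Real.log (Nq q) := le_of_mul_le_mul_left h2 (tq_pos h5)
    exact_mod_cast (Real.log_le_log_iff hM0 hNq0R).mp h3
  have hstrict : ∀ M : ℕ, 1 ≤ M → ell M < n → M < Nq q := by
    intro M hM1 hMlt
    have hm := master h5 (show M ≠ 0 by omega)
    have hM0 : (0:ℝ) < (M : ℝ) := by exact_mod_cast hM1
    have hcast : (ell M : ℝ) < (ell (Nq q) : ℝ) := by exact_mod_cast hMlt
    have h2 : tq q * Real.log M < tq q * Real.log (Nq q) := by linarith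
    have h3 : Real.log M < Real.log (Nq q) := lt_of_mul_lt_mul_left h2 (le_of_lt (tq_pos h5))
    exact_mod_cast (Real.log_lt_log_iff hM0 hNq0R).mp h3
  have hlandau_eq : landau n = Nq q :=
    le_antisymm (hupper (landau n) (one_le_landau n) (ell_landau_le n))
      (le_landau hNq1 (le_refl n))
  have hinc : landauInc n := by
    refine ⟨by omega, ?_⟩
    have h1 : ell (landau (n-1)) ≤ n - 1 := ell_landau_le _
    have h2 : ell (landau (n-1)) < n := by omega
    have h3 := hstrict _ (one_le_landau (n-1)) h2
    rw [hlandau_eq]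
    exact h3
  -- the swap construction
  set s' : Finset ℕ := insert (q+2) ((Nat.primesBelow (q+1)).erase q) with hs'
  set f' : ℕ → ℕ := fun p => if p = q+2 then 1 else expo q p with hf'
  set L' : ℕ := ∏ p ∈ s', p ^ f' p with hL'
  have hfq2 : f' (q+2) = 1 := by
    rw [hf']
    exact if_pos rfl
  have hq2nm : q+2 ∉ (Nat.primesBelow (q+1)).erase q := by
    intro h
    have := Nat.lt_of_mem_primesBelow (Finset.mem_of_mem_erase h)
    omega
  have hs'prime : ∀ p ∈ s', p.Prime := by
    intro p hp
    rcases Finset.mem_insert.mp hp with h | h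
    · rw [h]; exact hq2
    · exact Nat.prime_of_mem_primesBelow (Finset.mem_of_mem_erase h)
  have herase_congr : ∀ p ∈ (Nat.primesBelow (q+1)).erase q, p ^ f' p = p ^ expo q p := by
    intro p hp
    have hpne : p ≠ q+2 := by
      have := Nat.lt_of_mem_primesBelow (Finset.mem_of_mem_erase hp)
      omega
    rw [hf']
    simp only [if_neg hpne]
  have hsum' : ell L' = (q+2) + ∑ p ∈ (Nat.primesBelow (q+1)).erase q, pcost p (expo q p) := by
    rw [hL', ell_prod_primes s' hs'prime f', hs', Finset.sum_insert hq2nm]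
    congr 1
    · rw [hfq2, pcost_one]
    · refine Finset.sum_congr rfl fun p hp => ?_
      have hpne : p ≠ q+2 := by
        have := Nat.lt_of_mem_primesBelow (Finset.mem_of_mem_erase hp)
        omega
      rw [hf']
      simp only [if_neg hpne]
  have hsumN : n = q + ∑ p ∈ (Nat.primesBelow (q+1)).erase q, pcost p (expo q p) := by
    rw [hn, ell_Nq, ← Finset.add_sum_erase _ _ hqmem, hellq]
  have hellL' : ell L' = n + 2 := by
    rw [hsum']
    omega
  have hprod_pos : 0 < ∏ p ∈ (Nat.primesBelow (q+1)).erase q, p ^ expo q p := by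
    apply Finset.prod_pos
    intro p hp
    exact pow_pos (Nat.prime_of_mem_primesBelow (Finset.mem_of_mem_erase hp)).pos _
  have hLgt : Nq q < L' := by
    have hL'eq : L' = (q+2) * ∏ p ∈ (Nat.primesBelow (q+1)).erase q, p ^ expo q p := by
      rw [hL', hs', Finset.prod_insert hq2nm]
      rw [hfq2, pow_one]
      congr 1
      exact Finset.prod_congr rfl herase_congr
    have hNeq : Nq q = q * ∏ p ∈ (Nat.primesBelow (q+1)).erase q, p ^ expo q p := by
      rw [Nq, ← Finset.mul_prod_erase _ _ hqmem, expo_q_eq_one h5 hq, pow_one]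
    rw [hL'eq, hNeq]
    exact Nat.mul_lt_mul_of_lt_of_le (by omega) (le_refl _) hprod_pos
  have hL'1 : 1 ≤ L' := by
    rw [hL']
    exact Nat.one_le_iff_ne_zero.mpr (Finset.prod_ne_zero_iff.mpr
      fun p hp => pow_ne_zero _ (hs'prime p hp).pos.ne')
  have hfinal : landau n < landau (n+2) := by
    calc landau n = Nq q := hlandau_eq
    _ < L' := hLgt
    _ ≤ landau (n+2) := le_landau hL'1 (le_of_eq hellL')
  exact ⟨n, hqn, hinc, hfinal⟩

lemma exists_big_inc (htwin : {p : ℕ | p.Prime ∧ (p + 2).Prime}.Infinite) (B : ℕ) :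
    ∃ n, B ≤ n ∧ landauInc n ∧ landau n < landau (n+2) := by
  obtain ⟨qq, hqq, hgt⟩ := htwin.exists_gt (max B 4)
  have h4 : 4 < qq := lt_of_le_of_lt (le_max_right B 4) hgt
  have hB : B < qq := lt_of_le_of_lt (le_max_left B 4) hgt
  obtain ⟨n, hn1, hn2, hn3⟩ := exists_inc hqq.1 hqq.2 (by omega)
  exact ⟨n, by omega, hn2, hn3⟩

end LandauGap

/-- Under the twin prime conjecture, the gap between consecutive points
of increase of Landau's function satisfies `n_{k+1} - n_k ≤ 2` for infinitely many `k`. -/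

theorem gaps_landau_increase_le_two_of_twin_primes
    (htwin : {p : ℕ | p.Prime ∧ (p + 2).Prime}.Infinite) :
    {k : ℕ | landauNth (k + 1) - landauNth k ≤ 2}.Infinite := by
  classical
  apply Set.infinite_of_forall_exists_gt
  intro K
  obtain ⟨n, hnB, hinc, hstep⟩ := LandauGap.exists_big_inc htwin (landauNth K + 1)
  have hsetinf : (setOf landauInc).Infinite := by
    apply Set.infinite_of_forall_exists_gt
    intro a
    obtain ⟨m, hm1, hm2, -⟩ := LandauGap.exists_big_inc htwin (a+1)
    exact ⟨m, hm2, by omega⟩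
  set k := Nat.count landauInc n with hk
  have hnth : Nat.nth landauInc k = n := Nat.nth_count hinc
  have hmono := LandauGap.landau_mono (show n ≤ n + 1 by omega)
  have hn' : ∃ n', landauInc n' ∧ n < n' ∧ n' ≤ n + 2 := by
    by_cases hcase : landau n < landau (n+1)
    · exact ⟨n+1, ⟨by omega, by simpa using hcase⟩, by omega, by omega⟩
    · have heq : landau (n+1) = landau n := le_antisymm (not_lt.mp hcase) hmono
      refine ⟨n+2, ⟨by omega, ?_⟩, by omega, by omega⟩
      have h21 : (n+2) - 1 = n+1 := by omega
      show landau (n+2-1) < landau (n+2)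
      rw [show n+2-1 = n+1 from rfl, heq]
      exact hstep
  obtain ⟨n', hn'inc, hn'gt, hn'le⟩ := hn'
  have hcount : k + 1 ≤ Nat.count landauInc n' := by
    have h1 : Nat.count landauInc (n+1) = k + 1 := by
      rw [hk, Nat.count_succ, if_pos hinc]
    calc k + 1 = Nat.count landauInc (n+1) := h1.symm
    _ ≤ Nat.count landauInc n' := Nat.count_monotone _ (by omega)
  have hnth' : Nat.nth landauInc (Nat.count landauInc n') = n' := Nat.nth_count hn'inc
  have hle : Nat.nth landauInc (k+1) ≤ n' := by
    rw [← hnth']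
    exact (Nat.nth_le_nth hsetinf).mpr hcount
  have hKk : K < k := by
    by_contra hcon
    push_neg at hcon
    have h2 := (Nat.nth_le_nth hsetinf).mpr hcon
    rw [hnth] at h2
    have h3 : n ≤ landauNth K := h2
    omega
  refine ⟨k, ?_, hKk⟩
  have h1 : landauNth k = n := hnth
  have h2 : landauNth (k+1) ≤ n + 2 := le_trans hle hn'le
  simp only [Set.mem_setOf_eq]
  omega
end

section
/- There exist a constant C > 0 and ξ₀ such that for every real ξ ≥ ξ₀, setting ξ′ = ξ + ξ/log ξ, the number of pairs (Q, k) with Q prime and k ≥ 2 an integer satisfying ξ/log ξ ≤ (Q^k − Q^{k−1})/log Q ≤ ξ′/log ξ′ is at most C·√ξ. -/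
/-- Key estimate: membership forces `Q^k ≤ 8ξ`. -/
lemma aux_pow_le (ξ : ℝ) (hξ : Real.exp 100 ≤ ξ) {Q k : ℕ} (hQ : Q.Prime) (hk : 2 ≤ k)
    (h : ((Q : ℝ) ^ k - (Q : ℝ) ^ (k - 1)) / Real.log Q ≤
        (ξ + ξ / Real.log ξ) / Real.log (ξ + ξ / Real.log ξ)) :
    (Q : ℝ) ^ k ≤ 8 * ξ := by
  have hξpos : 0 < ξ := lt_of_lt_of_le (Real.exp_pos _) hξ
  have hlogξ : 100 ≤ Real.log ξ := by
    calc (100 : ℝ) = Real.log (Real.exp 100) := (Real.log_exp _).symm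
      _ ≤ Real.log ξ := Real.log_le_log (Real.exp_pos _) hξ
  set ξ' := ξ + ξ / Real.log ξ with hξ'def
  have hξ'ge : ξ ≤ ξ' := le_add_of_nonneg_right (div_nonneg hξpos.le (by linarith))
  have hξ'le : ξ' ≤ 2 * ξ := by
    have : ξ / Real.log ξ ≤ ξ := div_le_self hξpos.le (by linarith)
    simp only [hξ'def]; linarith
  have hξ'pos : 0 < ξ' := by linarith
  have hlogξ' : 100 ≤ Real.log ξ' := le_trans hlogξ (Real.log_le_log hξpos hξ'ge)
  have hQ2 : (2 : ℝ) ≤ (Q : ℝ) := by exact_mod_cast hQ.two_le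
  have hQpos : (0 : ℝ) < Q := by linarith
  have hlogQ : 0 < Real.log Q := Real.log_pos (by linarith)
  set x := (Q : ℝ) ^ k with hxdef
  have hxpos : 0 < x := pow_pos hQpos k
  have hsplit : x = (Q : ℝ) ^ (k - 1) * Q := by
    rw [hxdef, ← pow_succ]; congr 1; omega
  have hppos : (0 : ℝ) ≤ (Q : ℝ) ^ (k - 1) := pow_nonneg hQpos.le _
  have hhalf : x / 2 ≤ x - (Q : ℝ) ^ (k - 1) := by nlinarith
  have h1 : x / 2 / Real.log Q ≤ ξ' / Real.log ξ' := by
    calc x / 2 / Real.log Q ≤ (x - (Q : ℝ) ^ (k - 1)) / Real.log Q := by gcongr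
      _ ≤ ξ' / Real.log ξ' := h
  have h2 : x ≤ 2 * (ξ' / Real.log ξ') * Real.log Q := by
    rw [div_div, div_le_iff₀ (by positivity)] at h1
    calc x = x / 2 * 2 := by ring
      _ ≤ ξ' / Real.log ξ' * (2 * Real.log Q) * 2 / 2 := by
          nlinarith [h1]
      _ = 2 * (ξ' / Real.log ξ') * Real.log Q := by ring
  have hlogx : Real.log x = (k : ℝ) * Real.log Q := by rw [hxdef, Real.log_pow]
  have hk2 : (2 : ℝ) ≤ (k : ℝ) := by exact_mod_cast hk
  have hlogQle : Real.log Q ≤ Real.log x / 2 := by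
    rw [hlogx]; nlinarith [hlogQ.le]
  have hA : 0 < ξ' / Real.log ξ' := by positivity
  have h3 : x ≤ (ξ' / Real.log ξ') * Real.log x := by
    calc x ≤ 2 * (ξ' / Real.log ξ') * Real.log Q := h2
      _ ≤ 2 * (ξ' / Real.log ξ') * (Real.log x / 2) := by gcongr
      _ = (ξ' / Real.log ξ') * Real.log x := by ring
  have hsqpos : 0 < Real.sqrt x := Real.sqrt_pos.mpr hxpos
  have hmul : Real.sqrt x * Real.sqrt x = x := Real.mul_self_sqrt hxpos.le
  have hloglesq : Real.log x ≤ 2 * Real.sqrt x := by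
    have h4 := Real.log_le_sub_one_of_pos hsqpos
    have h5 : Real.log (Real.sqrt x) = Real.log x / 2 := Real.log_sqrt hxpos.le
    nlinarith
  have hsq : Real.sqrt x ≤ 2 * (ξ' / Real.log ξ') := by
    have h6 : x ≤ (ξ' / Real.log ξ') * (2 * Real.sqrt x) := by
      calc x ≤ (ξ' / Real.log ξ') * Real.log x := h3
        _ ≤ (ξ' / Real.log ξ') * (2 * Real.sqrt x) := by gcongr
    nlinarith
  have hsqle : Real.sqrt x ≤ ξ' := by
    have h7 : ξ' / Real.log ξ' ≤ ξ' / 2 :=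
      div_le_div_of_nonneg_left hξ'pos.le (by norm_num) (by linarith)
    calc Real.sqrt x ≤ 2 * (ξ' / Real.log ξ') := hsq
      _ ≤ 2 * (ξ' / 2) := mul_le_mul_of_nonneg_left h7 (by norm_num)
      _ = ξ' := by ring
  have hlogxle : Real.log x ≤ 2 * Real.log ξ' := by
    have h8 := Real.log_le_log hsqpos hsqle
    rw [Real.log_sqrt hxpos.le] at h8
    linarith
  have hlogQle' : Real.log Q ≤ Real.log ξ' := by linarith
  calc x ≤ 2 * (ξ' / Real.log ξ') * Real.log Q := h2
    _ ≤ 2 * (ξ' / Real.log ξ') * Real.log ξ' := by gcongr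
    _ = 2 * ξ' := by field_simp
    _ ≤ 8 * ξ := by linarith

/-- There exist `C > 0` and `ξ₀` such that for all `ξ ≥ ξ₀`, with
`ξ' = ξ + ξ/log ξ`, the number of pairs `(Q, k)`, `Q` prime, `k ≥ 2`, with
`ξ/log ξ ≤ (Q^k - Q^{k-1})/log Q ≤ ξ'/log ξ'` is at most `C √ξ`. -/
theorem card_prime_power_pairs_le :
    ∃ C : ℝ, 0 < C ∧ ∃ ξ₀ : ℝ, ∀ ξ : ℝ, ξ₀ ≤ ξ →
      ({qk : ℕ × ℕ | qk.1.Prime ∧ 2 ≤ qk.2 ∧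
          ξ / Real.log ξ ≤
            ((qk.1 : ℝ) ^ qk.2 - (qk.1 : ℝ) ^ (qk.2 - 1)) / Real.log qk.1 ∧
          ((qk.1 : ℝ) ^ qk.2 - (qk.1 : ℝ) ^ (qk.2 - 1)) / Real.log qk.1 ≤
            (ξ + ξ / Real.log ξ) / Real.log (ξ + ξ / Real.log ξ)}.ncard : ℝ) ≤
        C * Real.sqrt ξ := by
  refine ⟨60, by norm_num, Real.exp 100, fun ξ hξ => ?_⟩
  have hξpos : 0 < ξ := lt_of_lt_of_le (Real.exp_pos _) hξ
  have hlogξ : 100 ≤ Real.log ξ := by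
    calc (100 : ℝ) = Real.log (Real.exp 100) := (Real.log_exp _).symm
      _ ≤ Real.log ξ := Real.log_le_log (Real.exp_pos _) hξ
  set N2 : ℕ := ⌊Real.sqrt (8 * ξ)⌋₊ with hN2
  set N3 : ℕ := ⌊(8 * ξ) ^ ((1 : ℝ) / 3)⌋₊ with hN3
  set K : ℕ := ⌊Real.log (8 * ξ) / Real.log 2⌋₊ with hK
  set T : Finset (ℕ × ℕ) :=
    (Finset.Icc 2 N2 ×ˢ {2}) ∪ (Finset.Icc 2 N3 ×ˢ Finset.Icc 3 K) with hT
  have hsub : {qk : ℕ × ℕ | qk.1.Prime ∧ 2 ≤ qk.2 ∧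
          ξ / Real.log ξ ≤
            ((qk.1 : ℝ) ^ qk.2 - (qk.1 : ℝ) ^ (qk.2 - 1)) / Real.log qk.1 ∧
          ((qk.1 : ℝ) ^ qk.2 - (qk.1 : ℝ) ^ (qk.2 - 1)) / Real.log qk.1 ≤
            (ξ + ξ / Real.log ξ) / Real.log (ξ + ξ / Real.log ξ)} ⊆ (T : Set (ℕ × ℕ)) := by
    rintro ⟨Q, k⟩ ⟨hQ, hk, -, hub⟩
    have hx : (Q : ℝ) ^ k ≤ 8 * ξ := aux_pow_le ξ hξ hQ hk hub
    have hQ2 : (2 : ℝ) ≤ (Q : ℝ) := by exact_mod_cast hQ.two_le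
    simp only [hT, Finset.coe_union, Set.mem_union, Finset.coe_product, Set.mem_prod,
      Finset.mem_coe, Finset.mem_Icc, Finset.mem_singleton, Finset.coe_singleton,
      Set.mem_singleton_iff]
    rcases eq_or_lt_of_le hk with hk2 | hk3
    · left
      refine ⟨⟨hQ.two_le, Nat.le_floor ?_⟩, hk2.symm⟩
      have hk2' : k = 2 := hk2.symm
      rw [hk2'] at hx
      exact (Real.le_sqrt (by positivity) (by positivity)).mpr hx
    · right
      have hk3' : 3 ≤ k := hk3
      refine ⟨⟨hQ.two_le, Nat.le_floor ?_⟩, hk3', Nat.le_floor ?_⟩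
      · have h3 : (Q : ℝ) ^ (3 : ℕ) ≤ 8 * ξ :=
          le_trans (pow_le_pow_right₀ (by linarith) hk3') hx
        have heq : (Q : ℝ) = ((Q : ℝ) ^ (3 : ℕ)) ^ ((1 : ℝ) / 3) := by
          rw [← Real.rpow_natCast (Q : ℝ) 3, ← Real.rpow_mul (by positivity)]
          norm_num
        rw [heq]
        exact Real.rpow_le_rpow (by positivity) h3 (by norm_num)
      · have h2k : (2 : ℝ) ^ k ≤ 8 * ξ :=
          le_trans (pow_le_pow_left₀ (by norm_num) hQ2 k) hx
        have h9 : (k : ℝ) * Real.log 2 ≤ Real.log (8 * ξ) := by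
          rw [← Real.log_pow]
          exact Real.log_le_log (by positivity) h2k
        rw [le_div_iff₀ (Real.log_pos one_lt_two)]
        exact h9
  have hcard : (Set.ncard {qk : ℕ × ℕ | qk.1.Prime ∧ 2 ≤ qk.2 ∧
          ξ / Real.log ξ ≤
            ((qk.1 : ℝ) ^ qk.2 - (qk.1 : ℝ) ^ (qk.2 - 1)) / Real.log qk.1 ∧
          ((qk.1 : ℝ) ^ qk.2 - (qk.1 : ℝ) ^ (qk.2 - 1)) / Real.log qk.1 ≤
            (ξ + ξ / Real.log ξ) / Real.log (ξ + ξ / Real.log ξ)}) ≤ T.card := by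
    rw [← Set.ncard_coe_finset T]
    exact Set.ncard_le_ncard hsub T.finite_toSet
  have hTcard : T.card ≤ N2 + N3 * K := by
    calc T.card ≤ (Finset.Icc 2 N2 ×ˢ ({2} : Finset ℕ)).card +
        (Finset.Icc 2 N3 ×ˢ Finset.Icc 3 K).card := Finset.card_union_le _ _
      _ = (Finset.Icc 2 N2).card * 1 + (Finset.Icc 2 N3).card * (Finset.Icc 3 K).card := by
          simp [Finset.card_product]
      _ ≤ N2 + N3 * K := by
          rw [Nat.card_Icc, Nat.card_Icc, Nat.card_Icc]
          have h1 : N2 + 1 - 2 ≤ N2 := by omega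
          have h2 : N3 + 1 - 2 ≤ N3 := by omega
          have h3 : K + 1 - 3 ≤ K := by omega
          calc (N2 + 1 - 2) * 1 + (N3 + 1 - 2) * (K + 1 - 3) ≤ N2 * 1 + N3 * K :=
                Nat.add_le_add (Nat.mul_le_mul h1 le_rfl) (Nat.mul_le_mul h2 h3)
            _ = N2 + N3 * K := by ring
  -- now the real-number estimate
  have hN2le : (N2 : ℝ) ≤ Real.sqrt (8 * ξ) := Nat.floor_le (by positivity)
  have hN3le : (N3 : ℝ) ≤ (8 * ξ) ^ ((1 : ℝ) / 3) := Nat.floor_le (by positivity)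
  have hξ8 : (8 : ℝ) ≤ ξ := by
    nlinarith [Real.add_one_le_exp (100 : ℝ)]
  have hcnn : 0 ≤ Real.log (8 * ξ) / Real.log 2 :=
    div_nonneg (Real.log_nonneg (by linarith)) (Real.log_nonneg one_le_two)
  have hKle : (K : ℝ) ≤ Real.log (8 * ξ) / Real.log 2 :=
    Nat.floor_le hcnn
  have hlog2 : (0.6931471803 : ℝ) < Real.log 2 := Real.log_two_gt_d9
  have hsqrt8 : Real.sqrt (8 * ξ) ≤ 3 * Real.sqrt ξ := by
    rw [Real.sqrt_mul (by norm_num : (0:ℝ) ≤ 8)]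
    have : Real.sqrt 8 ≤ 3 := by
      rw [show (3 : ℝ) = Real.sqrt 9 by
        rw [show (9 : ℝ) = 3 ^ 2 by norm_num, Real.sqrt_sq (by norm_num)]]
      exact Real.sqrt_le_sqrt (by norm_num)
    nlinarith [Real.sqrt_nonneg ξ, Real.sqrt_nonneg (8:ℝ)]
  have hb : (8 * ξ) ^ ((1 : ℝ) / 3) = 2 * ξ ^ ((1 : ℝ) / 3) := by
    rw [Real.mul_rpow (by norm_num) hξpos.le]
    congr 1
    rw [show (8 : ℝ) = 2 ^ (3 : ℕ) by norm_num, ← Real.rpow_natCast 2 3,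
      ← Real.rpow_mul (by norm_num)]
    norm_num
  have hlog8ξ : Real.log (8 * ξ) ≤ 2 * Real.log ξ := by
    rw [Real.log_mul (by norm_num) hξpos.ne']
    have : Real.log 8 ≤ Real.log ξ := Real.log_le_log (by norm_num) hξ8
    linarith
  have hc : Real.log (8 * ξ) / Real.log 2 ≤ 4 * Real.log ξ := by
    rw [div_le_iff₀ (by linarith)]
    nlinarith
  have hlogle : Real.log ξ ≤ 6 * ξ ^ ((1 : ℝ) / 6) := by
    have h1 : Real.log (ξ ^ ((1 : ℝ) / 6)) = (1 / 6) * Real.log ξ :=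
      Real.log_rpow hξpos _
    have h2 : Real.log (ξ ^ ((1 : ℝ) / 6)) ≤ ξ ^ ((1 : ℝ) / 6) - 1 :=
      Real.log_le_sub_one_of_pos (by positivity)
    nlinarith [Real.rpow_nonneg hξpos.le ((1:ℝ)/6)]
  have hmulpow : ξ ^ ((1 : ℝ) / 3) * ξ ^ ((1 : ℝ) / 6) = Real.sqrt ξ := by
    rw [← Real.rpow_add hξpos, Real.sqrt_eq_rpow]
    norm_num
  have hbc : (8 * ξ) ^ ((1 : ℝ) / 3) * (Real.log (8 * ξ) / Real.log 2) ≤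
      48 * Real.sqrt ξ := by
    calc (8 * ξ) ^ ((1 : ℝ) / 3) * (Real.log (8 * ξ) / Real.log 2)
        ≤ (2 * ξ ^ ((1 : ℝ) / 3)) * (4 * Real.log ξ) := by
          rw [hb]
          exact mul_le_mul le_rfl hc hcnn (by positivity)
      _ ≤ (2 * ξ ^ ((1 : ℝ) / 3)) * (4 * (6 * ξ ^ ((1 : ℝ) / 6))) := by
          gcongr
      _ = 48 * (ξ ^ ((1 : ℝ) / 3) * ξ ^ ((1 : ℝ) / 6)) := by ring
      _ = 48 * Real.sqrt ξ := by rw [hmulpow]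
  have hN3K : (N3 : ℝ) * K ≤ 48 * Real.sqrt ξ := by
    calc (N3 : ℝ) * K ≤ (8 * ξ) ^ ((1 : ℝ) / 3) * (Real.log (8 * ξ) / Real.log 2) := by
          exact mul_le_mul hN3le hKle (Nat.cast_nonneg K) (by positivity)
      _ ≤ 48 * Real.sqrt ξ := hbc
  calc (Set.ncard _ : ℝ) ≤ (T.card : ℝ) := by exact_mod_cast hcard
    _ ≤ (N2 : ℝ) + (N3 : ℝ) * K := by exact_mod_cast hTcard
    _ ≤ 3 * Real.sqrt ξ + 48 * Real.sqrt ξ := by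
        have := le_trans hN2le hsqrt8
        linarith
    _ ≤ 60 * Real.sqrt ξ := by nlinarith [Real.sqrt_nonneg ξ]
end
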